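/- arXiv:1902.11260 — 9 statements merged into one kernel-verified Lean document; each statement's English description precedes it below -/
import Mathlib

section
/- A 3-face of the n-cube shares at most one 2-face (square) with an m-face (m ≥ 3) unless it is entirely contained in that m-face. More generally, for 3 ≤ k ≤ m, a k-face shares at most C(k-1,2)·2^(k-3) squares with an m-face or is contained in it. -/
/-- The dimension of a face of the `n`-cube, given as an element of
`{0,1,*}^n ≅ (Fin n → Option Bool)` where `none` plays the role of `*`:
the number of `*` entries. -/
def faceDim {n : ℕ} (F : Fin n → Option Bool) : ℕ :=
  (Finset.univ.filter (fun p => F p = none)).card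

/-- Face `F` is contained in face `G`: wherever `G` has a fixed bit,
`F` has the same fixed bit. -/
def faceContained {n : ℕ} (F G : Fin n → Option Bool) : Prop :=
  ∀ p b, G p = some b → F p = some b

lemma mono_bound {a b : ℕ} (h : a ≤ b) :
    a.choose 2 * 2 ^ (a - 2) ≤ b.choose 2 * 2 ^ (b - 2) :=
  Nat.mul_le_mul (Nat.choose_le_choose _ h)
    (Nat.pow_le_pow_right (by norm_num) (Nat.sub_le_sub_right h 2))

lemma key_bound {n : ℕ} (D E : Fin n → Option Bool) :
    Nat.card {S : Fin n → Option Bool //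
        faceDim S = 2 ∧ faceContained S D ∧ faceContained S E}
      ≤ (Finset.univ.filter (fun p => D p = none ∧ E p = none)).card.choose 2 *
        2 ^ ((Finset.univ.filter (fun p => D p = none ∧ E p = none)).card - 2) := by
  classical
  set A : Finset (Fin n) := Finset.univ.filter (fun p => D p = none ∧ E p = none) with hA
  -- decoding map from the sigma type to raw functions
  let dec : (Σ T : {T : Finset (Fin n) // T ⊆ A ∧ T.card = 2}, (↥(A \ T.1) → Bool)) →
      (Fin n → Option Bool) := fun x p =>
    if hp : p ∈ A \ x.1.1 then some (x.2 ⟨p, hp⟩)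
    else if p ∈ x.1.1 then none
    else if D p = none then E p else D p
  -- the encoding map
  have hsub : ∀ (S : {S : Fin n → Option Bool //
      faceDim S = 2 ∧ faceContained S D ∧ faceContained S E}),
      (Finset.univ.filter (fun p => S.1 p = none)) ⊆ A := by
    rintro ⟨S, h2, hSD, hSE⟩ p hp
    simp only [Finset.mem_filter, Finset.mem_univ, true_and] at hp
    simp only [hA, Finset.mem_filter, Finset.mem_univ, true_and]
    constructor
    · cases hDp : D p with
      | none => rfl
      | some b => exact absurd (hSD p b hDp) (by simp [hp])
    · cases hEp : E p with
      | none => rfl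
      | some b => exact absurd (hSE p b hEp) (by simp [hp])
  let enc : {S : Fin n → Option Bool //
      faceDim S = 2 ∧ faceContained S D ∧ faceContained S E} →
      (Σ T : {T : Finset (Fin n) // T ⊆ A ∧ T.card = 2}, (↥(A \ T.1) → Bool)) :=
    fun S => ⟨⟨Finset.univ.filter (fun p => S.1 p = none), hsub S, S.2.1⟩,
      fun p => (S.1 p.1).getD false⟩
  have hleft : ∀ S, dec (enc S) = S.1 := by
    rintro ⟨S, h2, hSD, hSE⟩
    funext p
    simp only [dec, enc]
    by_cases hp : p ∈ A \ Finset.univ.filter (fun q => S q = none)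
    · rw [dif_pos hp]
      have hpn : ¬ S p = none := by
        have := (Finset.mem_sdiff.mp hp).2
        simpa using this
      cases hSp : S p with
      | none => exact absurd hSp hpn
      | some b => simp [hSp]
    · rw [dif_neg hp]
      by_cases hpt : p ∈ Finset.univ.filter (fun q => S q = none)
      · rw [if_pos hpt]
        have : S p = none := by simpa using hpt
        exact this.symm
      · rw [if_neg hpt]
        have hpA : p ∉ A := by
          intro hpA'
          exact hp (Finset.mem_sdiff.mpr ⟨hpA', hpt⟩)
        simp only [hA, Finset.mem_filter, Finset.mem_univ, true_and, not_and_or] at hpA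
        rcases hpA with hDp | hEp
        · rw [if_neg hDp]
          cases hDp' : D p with
          | none => exact absurd hDp' hDp
          | some b => exact (hSD p b hDp').symm
        · by_cases hDp : D p = none
          · rw [if_pos hDp]
            cases hEp' : E p with
            | none => exact absurd hEp' hEp
            | some b => exact (hSE p b hEp').symm
          · rw [if_neg hDp]
            cases hDp' : D p with
            | none => exact absurd hDp' hDp
            | some b => exact (hSD p b hDp').symm
  have hinj : Function.Injective enc := by
    intro S S' h
    have := congrArg dec h
    rw [hleft S, hleft S'] at this
    exact Subtype.ext this
  have hle := Nat.card_le_card_of_injective enc hinj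
  refine hle.trans ?_
  -- compute the cardinality of the sigma type
  rw [Nat.card_eq_fintype_card, Fintype.card_sigma]
  have hterm : ∀ T : {T : Finset (Fin n) // T ⊆ A ∧ T.card = 2},
      Fintype.card (↥(A \ T.1) → Bool) = 2 ^ (A.card - 2) := by
    rintro ⟨T, hTA, hT2⟩
    rw [Fintype.card_fun, Fintype.card_bool, Fintype.card_coe,
      Finset.card_sdiff_of_subset hTA, hT2]
  rw [Finset.sum_congr rfl (fun T _ => hterm T), Finset.sum_const, smul_eq_mul]
  apply Nat.mul_le_mul_right
  rw [Finset.card_univ, Fintype.card_subtype]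
  have : Finset.univ.filter (fun T : Finset (Fin n) => T ⊆ A ∧ T.card = 2)
      = A.powersetCard 2 := by
    ext T
    simp [Finset.mem_powersetCard]
  rw [this, Finset.card_powersetCard]

/-- For `3 ≤ k ≤ m`, a `k`-face of the `n`-cube either is contained in a given
`m`-face or shares at most `C(k-1,2)·2^(k-3)` squares (2-faces) with it. -/
theorem stmt_0 (n k m : ℕ) (hk : 3 ≤ k) (hkm : k ≤ m)
    (D E : Fin n → Option Bool) (hD : faceDim D = k) (hE : faceDim E = m) :
    faceContained D E ∨
      Nat.card {S : Fin n → Option Bool //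
          faceDim S = 2 ∧ faceContained S D ∧ faceContained S E}
        ≤ (k - 1).choose 2 * 2 ^ (k - 3) := by
  classical
  by_cases hcont : faceContained D E
  · exact Or.inl hcont
  right
  simp only [faceContained, not_forall] at hcont
  obtain ⟨p, b, hEp, hDp⟩ := hcont
  by_cases hDn : D p = none
  · -- A has at most k-1 elements
    have hsub : Finset.univ.filter (fun q => D q = none ∧ E q = none)
        ⊆ (Finset.univ.filter (fun q => D q = none)).erase p := by
      intro q hq
      simp only [Finset.mem_filter, Finset.mem_univ, true_and] at hq
      refine Finset.mem_erase.mpr ⟨?_, by simp [hq.1]⟩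
      rintro rfl
      rw [hEp] at hq
      exact absurd hq.2 (by simp)
    have hcard : (Finset.univ.filter (fun q => D q = none ∧ E q = none)).card ≤ k - 1 := by
      calc _ ≤ ((Finset.univ.filter (fun q => D q = none)).erase p).card :=
            Finset.card_le_card hsub
        _ = k - 1 := by
            rw [Finset.card_erase_of_mem (by simp [hDn])]
            rw [show (Finset.univ.filter (fun q => D q = none)).card = k from hD]
    refine (key_bound D E).trans ?_
    refine (mono_bound hcard).trans ?_
    have : k - 1 - 2 = k - 3 := by omega
    rw [this]
  · -- contradiction on any shared square: the set is empty
    have : IsEmpty {S : Fin n → Option Bool //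
        faceDim S = 2 ∧ faceContained S D ∧ faceContained S E} := by
      constructor
      rintro ⟨S, _, hSD, hSE⟩
      cases hDp' : D p with
      | none => exact hDn hDp'
      | some b' =>
        have h1 := hSD p b' hDp'
        have h2 := hSE p b hEp
        rw [h1] at h2
        apply hDp
        rw [hDp', Option.some_inj.mp h2]
    rw [Nat.card_of_isEmpty]
    exact Nat.zero_le _
end

section
/- Every minor of a gaussoid is a gaussoid: if G ⊆ A_n satisfies the gaussoid axioms and (L|M) is a face of the n-cube, then the (L|M)-minor π_{(L|M)}(G ∩ (L|M)) satisfies the gaussoid axioms on the L-cube. -/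
abbrev Sq (n : ℕ) := Finset (Fin n) × Finset (Fin n)

/-- `G` is a gaussoid on the cube with axis set `V ⊆ [n]`: it consists of
squares `(ij|K)` with `ijK ⊆ V` and satisfies the gaussoid axioms (G1)-(G4)
for all distinct `i,j,k ∈ V` and `L ⊆ V \ {i,j,k}`. -/
def IsGaussoidOn {n : ℕ} (V : Finset (Fin n)) (G : Set (Sq n)) : Prop :=
  (∀ x ∈ G, x.1.card = 2 ∧ Disjoint x.1 x.2 ∧ x.1 ∪ x.2 ⊆ V) ∧
  ∀ i j k : Fin n, ∀ L : Finset (Fin n),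
    i ∈ V → j ∈ V → k ∈ V → L ⊆ V →
    i ≠ j → i ≠ k → j ≠ k → i ∉ L → j ∉ L → k ∉ L →
    ((({i,j}, L) ∈ G ∧ ({i,k}, insert j L) ∈ G →
        ({i,k}, L) ∈ G ∧ ({i,j}, insert k L) ∈ G) ∧
     (({i,j}, insert k L) ∈ G ∧ ({i,k}, insert j L) ∈ G →
        ({i,j}, L) ∈ G ∧ ({i,k}, L) ∈ G) ∧
     (({i,j}, L) ∈ G ∧ ({i,k}, L) ∈ G →
        ({i,j}, insert k L) ∈ G ∧ ({i,k}, insert j L) ∈ G) ∧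
     (({i,j}, L) ∈ G ∧ ({i,j}, insert k L) ∈ G →
        ({i,k}, L) ∈ G ∨ ({j,k}, L) ∈ G))

/-- The `(L|M)`-minor of a set of squares `G`:
`π_{(L|M)}(G ∩ (L|M)) = {(ij|K) : ijK ⊆ L, (ij|K∪M) ∈ G}`. -/
def minor {n : ℕ} (G : Set (Sq n)) (L M : Finset (Fin n)) : Set (Sq n) :=
  {x | x.1 ∪ x.2 ⊆ L ∧ (x.1, x.2 ∪ M) ∈ G}

/-- Every minor of a gaussoid is a gaussoid: if `G` satisfies the gaussoid
axioms on the whole `n`-cube and `(L|M)` is a face, then the `(L|M)`-minor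
satisfies the gaussoid axioms on the `L`-cube. -/
theorem stmt_3 (n : ℕ) (G : Set (Sq n)) (L M : Finset (Fin n))
    (hLM : Disjoint L M) (hG : IsGaussoidOn Finset.univ G) :
    IsGaussoidOn L (minor G L M) := by
  obtain ⟨hcard, hax⟩ := hG
  constructor
  · rintro ⟨a, b⟩ ⟨hsub, hmem⟩
    obtain ⟨h1, h2, _⟩ := hcard _ hmem
    exact ⟨h1, (Finset.disjoint_union_right.mp h2).1, hsub⟩
  · intro i j k K hi hj hk hKL hij hik hjk hiK hjK hkK
    have hiM : i ∉ M := Finset.disjoint_left.mp hLM hi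
    have hjM : j ∉ M := Finset.disjoint_left.mp hLM hj
    have hkM : k ∉ M := Finset.disjoint_left.mp hLM hk
    have hiKM : i ∉ K ∪ M := by simp [hiK, hiM]
    have hjKM : j ∉ K ∪ M := by simp [hjK, hjM]
    have hkKM : k ∉ K ∪ M := by simp [hkK, hkM]
    obtain ⟨g1, g2, g3, g4⟩ := hax i j k (K ∪ M) (Finset.mem_univ _) (Finset.mem_univ _)
      (Finset.mem_univ _) (Finset.subset_univ _) hij hik hjk hiKM hjKM hkKM
    have ej : insert j K ∪ M = insert j (K ∪ M) := by
      ext x; simp [Finset.mem_insert, Finset.mem_union, or_assoc]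
    have ek : insert k K ∪ M = insert k (K ∪ M) := by
      ext x; simp [Finset.mem_insert, Finset.mem_union, or_assoc]
    have sIJ : ({i,j} : Finset (Fin n)) ∪ K ⊆ L := by
      intro x hx
      rcases Finset.mem_union.mp hx with h | h
      · rcases Finset.mem_insert.mp h with h | h
        · exact h ▸ hi
        · exact (Finset.mem_singleton.mp h) ▸ hj
      · exact hKL h
    have sIK : ({i,k} : Finset (Fin n)) ∪ K ⊆ L := by
      intro x hx
      rcases Finset.mem_union.mp hx with h | h
      · rcases Finset.mem_insert.mp h with h | h
        · exact h ▸ hi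
        · exact (Finset.mem_singleton.mp h) ▸ hk
      · exact hKL h
    have sJK : ({j,k} : Finset (Fin n)) ∪ K ⊆ L := by
      intro x hx
      rcases Finset.mem_union.mp hx with h | h
      · rcases Finset.mem_insert.mp h with h | h
        · exact h ▸ hj
        · exact (Finset.mem_singleton.mp h) ▸ hk
      · exact hKL h
    have sIJk : ({i,j} : Finset (Fin n)) ∪ insert k K ⊆ L := by
      intro x hx
      rcases Finset.mem_union.mp hx with h | h
      · exact sIJ (Finset.mem_union_left _ h)
      · rcases Finset.mem_insert.mp h with h | h
        · exact h ▸ hk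
        · exact hKL h
    have sIKj : ({i,k} : Finset (Fin n)) ∪ insert j K ⊆ L := by
      intro x hx
      rcases Finset.mem_union.mp hx with h | h
      · exact sIK (Finset.mem_union_left _ h)
      · rcases Finset.mem_insert.mp h with h | h
        · exact h ▸ hj
        · exact hKL h
    refine ⟨?_, ?_, ?_, ?_⟩
    · rintro ⟨⟨-, h1⟩, ⟨-, h2⟩⟩
      rw [ej] at h2
      obtain ⟨a, b⟩ := g1 ⟨h1, h2⟩
      exact ⟨⟨sIK, a⟩, ⟨sIJk, by rw [ek]; exact b⟩⟩
    · rintro ⟨⟨-, h1⟩, ⟨-, h2⟩⟩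
      rw [ek] at h1; rw [ej] at h2
      obtain ⟨a, b⟩ := g2 ⟨h1, h2⟩
      exact ⟨⟨sIJ, a⟩, ⟨sIK, b⟩⟩
    · rintro ⟨⟨-, h1⟩, ⟨-, h2⟩⟩
      obtain ⟨a, b⟩ := g3 ⟨h1, h2⟩
      exact ⟨⟨sIJk, by rw [ek]; exact a⟩, ⟨sIKj, by rw [ej]; exact b⟩⟩
    · rintro ⟨⟨-, h1⟩, ⟨-, h2⟩⟩
      rw [ek] at h2
      rcases g4 ⟨h1, h2⟩ with a | a
      · exact Or.inl ⟨sIK, a⟩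
      · exact Or.inr ⟨sJK, a⟩
end

section
/- A set G ⊆ A_n is an n-gaussoid if and only if for every k with 3 ≤ k ≤ n, every k-minor of G is a k-gaussoid. In particular, G is a gaussoid if and only if all its 3-minors (one for each 3-face of the n-cube) are 3-gaussoids. -/
lemma mem_minor_iff {n : ℕ} {G : Set (Sq n)} {L M : Finset (Fin n)}
    (p q : Fin n) (S : Finset (Fin n)) (hp : p ∈ L) (hq : q ∈ L) (hS : S ⊆ L) :
    (({p,q}, S) ∈ minor G L M ↔ ({p,q}, S ∪ M) ∈ G) := by
  simp only [minor, Set.mem_setOf_eq]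
  exact ⟨fun h => h.2, fun h =>
    ⟨Finset.union_subset (by simp [Finset.insert_subset_iff, hp, hq]) hS, h⟩⟩

lemma minor_gaussoid {n : ℕ} {G : Set (Sq n)} (hG : IsGaussoidOn Finset.univ G)
    (L M : Finset (Fin n)) (hdisj : Disjoint L M) :
    IsGaussoidOn L (minor G L M) := by
  obtain ⟨hwf, hax⟩ := hG
  constructor
  · rintro ⟨a, b⟩ ⟨hsub, hmem⟩
    obtain ⟨h1, h2, -⟩ := hwf _ hmem
    exact ⟨h1, (Finset.disjoint_union_right.mp h2).1, hsub⟩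
  · intro i j k K hi hj hk hK hij hik hjk hiK hjK hkK
    have hiM : i ∉ M := Finset.disjoint_left.mp hdisj hi
    have hjM : j ∉ M := Finset.disjoint_left.mp hdisj hj
    have hkM : k ∉ M := Finset.disjoint_left.mp hdisj hk
    have := hax i j k (K ∪ M) (by simp) (by simp) (by simp) (by simp) hij hik hjk
      (by simp [hiK, hiM]) (by simp [hjK, hjM]) (by simp [hkK, hkM])
    rw [mem_minor_iff i j K hi hj hK, mem_minor_iff i k K hi hk hK,
      mem_minor_iff j k K hj hk hK,
      mem_minor_iff i j (insert k K) hi hj (Finset.insert_subset hk hK),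
      mem_minor_iff i k (insert j K) hi hk (Finset.insert_subset hj hK)]
    simpa only [Finset.insert_union] using this

lemma gaussoid_of_minors {n : ℕ} {G : Set (Sq n)}
    (hwf : ∀ x ∈ G, x.1.card = 2 ∧ Disjoint x.1 x.2)
    (h : ∀ L M : Finset (Fin n), Disjoint L M → L.card = 3 →
      IsGaussoidOn L (minor G L M)) :
    IsGaussoidOn Finset.univ G := by
  constructor
  · exact fun x hx => ⟨(hwf x hx).1, (hwf x hx).2, Finset.subset_univ _⟩
  · intro i j k K _ _ _ _ hij hik hjk hiK hjK hkK
    have hdisj : Disjoint ({i,j,k} : Finset (Fin n)) K := by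
      simp only [Finset.disjoint_left, Finset.mem_insert, Finset.mem_singleton]
      rintro a (rfl | rfl | rfl) <;> assumption
    have hcard : ({i,j,k} : Finset (Fin n)).card = 3 := by
      rw [Finset.card_insert_of_notMem (by simp [hij, hik]),
        Finset.card_insert_of_notMem (by simp [hjk]), Finset.card_singleton]
    obtain ⟨-, hax⟩ := h {i,j,k} K hdisj hcard
    have hi : i ∈ ({i,j,k} : Finset (Fin n)) := by simp
    have hj : j ∈ ({i,j,k} : Finset (Fin n)) := by simp
    have hk : k ∈ ({i,j,k} : Finset (Fin n)) := by simp
    have := hax i j k ∅ hi hj hk (Finset.empty_subset _) hij hik hjk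
      (Finset.notMem_empty _) (Finset.notMem_empty _) (Finset.notMem_empty _)
    rw [mem_minor_iff i j ∅ hi hj (Finset.empty_subset _),
      mem_minor_iff i k ∅ hi hk (Finset.empty_subset _),
      mem_minor_iff j k ∅ hj hk (Finset.empty_subset _),
      mem_minor_iff i j (insert k ∅) hi hj (by simp),
      mem_minor_iff i k (insert j ∅) hi hk (by simp)] at this
    simpa only [Finset.insert_union, Finset.empty_union] using this

lemma minor_univ_empty {n : ℕ} (G : Set (Sq n)) : minor G Finset.univ ∅ = G := by
  ext x; simp [minor]

/-- A set `G` of squares of the `n`-cube is an `n`-gaussoid iff for every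
`3 ≤ k ≤ n` all its `k`-minors are `k`-gaussoids; in particular iff all of
its `3`-minors are `3`-gaussoids. -/
theorem stmt_4 (n : ℕ) (hn : 3 ≤ n) (G : Set (Sq n))
    (hwf : ∀ x ∈ G, x.1.card = 2 ∧ Disjoint x.1 x.2) :
    (IsGaussoidOn Finset.univ G ↔
      ∀ k, 3 ≤ k → k ≤ n → ∀ L M : Finset (Fin n), Disjoint L M → L.card = k →
        IsGaussoidOn L (minor G L M)) ∧
    (IsGaussoidOn Finset.univ G ↔
      ∀ L M : Finset (Fin n), Disjoint L M → L.card = 3 →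
        IsGaussoidOn L (minor G L M)) := by
  constructor
  · constructor
    · intro hG k _ _ L M hd _
      exact minor_gaussoid hG L M hd
    · intro h
      have := h n hn le_rfl Finset.univ ∅ (by simp)
        (by simp [Finset.card_univ])
      rwa [minor_univ_empty] at this
  · constructor
    · intro hG L M hd _
      exact minor_gaussoid hG L M hd
    · intro h
      exact gaussoid_of_minors hwf h
end

section
/- The graph Q(n,k,p,q) is a complete graph if and only if n + q ≤ p + k. -/
/-- The set of star positions of a face. -/
def stars {n : ℕ} (F : Fin n → Option Bool) : Finset (Fin n) :=
  Finset.univ.filter (fun p => F p = none)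

/-- Two faces are compatible (have nonempty intersection in the face lattice)
iff they agree on every coordinate which is fixed in both. -/
def compatible {n : ℕ} (D S : Fin n → Option Bool) : Prop :=
  ∀ p b b', D p = some b → S p = some b' → b = b'

/-- `dim (D ∩ S) ≥ q` in the face lattice of the `n`-cube (for `q : ℕ`). -/
def meets {n : ℕ} (q : ℕ) (D S : Fin n → Option Bool) : Prop :=
  compatible D S ∧ q ≤ (stars D ∩ stars S).card

/-- The graph `Q(n,k,p,q)`: vertices are the `k`-faces of the `n`-cube, and two
distinct `k`-faces `D`, `F` are adjacent iff there is a `p`-face `S` with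
`dim (D ∩ S) ≥ q` and `dim (F ∩ S) ≥ q`. -/
def Q (n k p q : ℕ) : SimpleGraph {D : Fin n → Option Bool // faceDim D = k} where
  Adj D F := D ≠ F ∧
    ∃ S : Fin n → Option Bool, faceDim S = p ∧ meets q D.1 S ∧ meets q F.1 S
  symm := by
    constructor
    rintro D F ⟨h, S, hS, h1, h2⟩
    exact ⟨Ne.symm h, S, hS, h2, h1⟩
  loopless := by constructor; rintro D ⟨h, -⟩; exact h rfl

lemma mem_stars {n : ℕ} (F : Fin n → Option Bool) (i : Fin n) :
    i ∈ stars F ↔ F i = none := by simp [stars]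

lemma faceDim_eq_card_stars {n : ℕ} (F : Fin n → Option Bool) :
    faceDim F = (stars F).card := rfl

/-- `Q(n,k,p,q)` (for `n ≥ k ≥ p ≥ q`) is a complete graph iff `n + q ≤ p + k`. -/
theorem stmt_7 (n k p q : ℕ) (hq : q ≤ p) (hp : p ≤ k) (hk : k ≤ n) :
    (∀ D F : {D : Fin n → Option Bool // faceDim D = k},
        D ≠ F → (Q n k p q).Adj D F) ↔ n + q ≤ p + k := by
  constructor
  · -- forward: completeness implies the inequality
    intro hcomp
    rcases eq_or_lt_of_le hk with rfl | hklt
    · omega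
    -- two k-faces with the same stars (first k coords) and opposite fixed values
    set D : Fin n → Option Bool := fun i => if (i : ℕ) < k then none else some false with hD
    set F : Fin n → Option Bool := fun i => if (i : ℕ) < k then none else some true with hF
    have hstarsD : stars D = Finset.Iio (⟨k, hklt⟩ : Fin n) := by
      ext i; simp [mem_stars, hD, Fin.lt_def]
    have hstarsF : stars F = Finset.Iio (⟨k, hklt⟩ : Fin n) := by
      ext i; simp [mem_stars, hF, Fin.lt_def]
    have hdimD : faceDim D = k := by
      rw [faceDim_eq_card_stars, hstarsD, Fin.card_Iio]
    have hdimF : faceDim F = k := by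
      rw [faceDim_eq_card_stars, hstarsF, Fin.card_Iio]
    have hne : (⟨D, hdimD⟩ : {D : Fin n → Option Bool // faceDim D = k}) ≠ ⟨F, hdimF⟩ := by
      intro h
      have := congrFun (congrArg Subtype.val h) ⟨k, hklt⟩
      simp [hD, hF] at this
    obtain ⟨-, S, hSdim, ⟨hcD, hqD'⟩, ⟨hcF, -⟩⟩ := hcomp _ _ hne
    have hqD : q ≤ (stars D ∩ stars S).card := hqD'
    -- S must be `none` outside the first k coordinates
    have hsub : (Finset.univ.filter (fun i : Fin n => ¬ (i : ℕ) < k)) ⊆ stars S := by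
      intro i hi
      simp only [Finset.mem_filter] at hi
      rw [mem_stars]
      cases hS : S i with
      | none => rfl
      | some b =>
        have h1 := hcD i false b (by simp [hD, hi.2]) hS
        have h2 := hcF i true b (by simp [hF, hi.2]) hS
        simp [← h1] at h2
    have hdisj : Disjoint (stars D ∩ stars S)
        (Finset.univ.filter (fun i : Fin n => ¬ (i : ℕ) < k)) := by
      rw [Finset.disjoint_left]
      intro i hi hi'
      simp only [Finset.mem_filter] at hi'
      rw [Finset.mem_inter, hstarsD, Finset.mem_Iio, Fin.lt_def] at hi
      exact hi'.2 hi.1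
    have hunion : (stars D ∩ stars S) ∪
        (Finset.univ.filter (fun i : Fin n => ¬ (i : ℕ) < k)) ⊆ stars S :=
      Finset.union_subset Finset.inter_subset_right hsub
    have hcardB : (Finset.univ.filter (fun i : Fin n => ¬ (i : ℕ) < k)).card = n - k := by
      have : (Finset.univ.filter (fun i : Fin n => ¬ (i : ℕ) < k)) =
          (Finset.Iio (⟨k, hklt⟩ : Fin n))ᶜ := by
        ext i; simp [Fin.lt_def]
      rw [this, Finset.card_compl, Fin.card_Iio, Fintype.card_fin]
    have hle : (stars D ∩ stars S).card + (n - k) ≤ p := by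
      calc (stars D ∩ stars S).card + (n - k)
          = ((stars D ∩ stars S) ∪
            (Finset.univ.filter (fun i : Fin n => ¬ (i : ℕ) < k))).card := by
            rw [Finset.card_union_of_disjoint hdisj, hcardB]
        _ ≤ (stars S).card := Finset.card_le_card hunion
        _ = p := (faceDim_eq_card_stars S) ▸ hSdim
    omega
  · -- backward: the inequality implies completeness
    intro hineq D F hne
    refine ⟨hne, ?_⟩
    set T := stars D.1 with hT
    set U := stars F.1 with hU
    have hTcard : T.card = k := (faceDim_eq_card_stars D.1) ▸ D.2
    have hUcard : U.card = k := (faceDim_eq_card_stars F.1) ▸ F.2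
    set A := Finset.univ.filter (fun i : Fin n => D.1 i ≠ none ∧ F.1 i ≠ none ∧ D.1 i ≠ F.1 i)
      with hA
    set t := (T ∩ U).card with ht
    -- pick q stars shared with T and q shared with U, overlapping in T ∩ U
    obtain ⟨W, hWsub, hWcard⟩ := Finset.exists_subset_card_eq (s := T ∩ U) (n := min q t)
      (min_le_right q t)
    have hTU : (T \ U).card = k - t := by
      have := Finset.card_sdiff_add_card_inter T U; omega
    have hUT : (U \ T).card = k - t := by
      have h1 := Finset.card_sdiff_add_card_inter U T
      have h2 : (U ∩ T).card = t := by rw [Finset.inter_comm]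
      omega
    have htk : t ≤ k := by
      rw [← hTcard]; exact Finset.card_le_card Finset.inter_subset_left
    obtain ⟨X, hXsub, hXcard⟩ := Finset.exists_subset_card_eq (s := T \ U) (n := q - min q t)
      (by rw [hTU]; omega)
    obtain ⟨Y, hYsub, hYcard⟩ := Finset.exists_subset_card_eq (s := U \ T) (n := q - min q t)
      (by rw [hUT]; omega)
    -- A is disjoint from T ∪ U
    have hAT : ∀ i ∈ A, i ∉ T ∧ i ∉ U := by
      intro i hi
      simp only [hA, Finset.mem_filter] at hi
      constructor
      · rw [hT, mem_stars]; exact fun h => hi.2.1 h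
      · rw [hU, mem_stars]; exact fun h => hi.2.2.1 h
    have hAcard : A.card ≤ n - (2 * k - t) := by
      have hdisj : Disjoint A (T ∪ U) := by
        rw [Finset.disjoint_left]
        intro i hi hi'
        rcases Finset.mem_union.1 hi' with h | h
        · exact (hAT i hi).1 h
        · exact (hAT i hi).2 h
      have hTUcard : (T ∪ U).card = 2 * k - t := by
        have := Finset.card_union_add_card_inter T U
        omega
      have : A.card + (T ∪ U).card ≤ n := by
        rw [← Finset.card_union_of_disjoint hdisj]
        calc (A ∪ (T ∪ U)).card ≤ (Finset.univ : Finset (Fin n)).card :=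
              Finset.card_le_card (Finset.subset_univ _)
          _ = n := by simp
      omega
    set Z' := A ∪ W ∪ X ∪ Y with hZ'
    have hZ'card : Z'.card ≤ p := by
      have h1 : Z'.card ≤ A.card + W.card + X.card + Y.card := by
        calc Z'.card ≤ (A ∪ W ∪ X).card + Y.card := Finset.card_union_le _ _
          _ ≤ (A ∪ W).card + X.card + Y.card := by
              have := Finset.card_union_le (A ∪ W) X; omega
          _ ≤ A.card + W.card + X.card + Y.card := by
              have := Finset.card_union_le A W; omega
      rw [hWcard, hXcard, hYcard] at h1
      have hTUn : (T ∪ U).card ≤ n := by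
        calc (T ∪ U).card ≤ (Finset.univ : Finset (Fin n)).card :=
              Finset.card_le_card (Finset.subset_univ _)
          _ = n := by simp
      have hinter := Finset.card_union_add_card_inter T U
      omega
    obtain ⟨Z, hZ'Z, -, hZcard⟩ := Finset.exists_subsuperset_card_eq
      (Finset.subset_univ Z') hZ'card (by simp; omega)
    -- define the p-face S
    set S : Fin n → Option Bool :=
      fun i => if i ∈ Z then none else some (((D.1 i).or (F.1 i)).getD false) with hS
    have hstarsS : stars S = Z := by
      ext i
      rw [mem_stars, hS]
      by_cases h : i ∈ Z <;> simp [h]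
    have hAZ : A ⊆ Z := fun i hi => hZ'Z (by simp [hZ']; tauto)
    -- compatibility with D
    have hcD : compatible D.1 S := by
      intro i b b' hb hb'
      rw [hS] at hb'
      by_cases h : i ∈ Z
      · simp [h] at hb'
      · simp [h, hb] at hb'
        exact hb'
    have hcF : compatible F.1 S := by
      intro i b b' hb hb'
      rw [hS] at hb'
      by_cases h : i ∈ Z
      · simp [h] at hb'
      · cases hd : D.1 i with
        | none =>
          simp [h, hd, hb] at hb'
          exact hb'
        | some c =>
          have hiA : i ∉ A := fun hiA => h (hAZ hiA)
          simp only [hA, Finset.mem_filter, not_and, Finset.mem_univ, true_implies,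
            not_not] at hiA
          have hDF : D.1 i = F.1 i := hiA (by simp [hd]) (by simp [hb])
          rw [hd, hb] at hDF
          have hcb : c = b := by injection hDF
          simp [h, hd] at hb'
          subst hcb
          exact hb'
    have hqT : q ≤ (T ∩ stars S).card := by
      rw [hstarsS]
      have hsub : W ∪ X ⊆ T ∩ Z := by
        intro i hi
        rcases Finset.mem_union.1 hi with h | h
        · exact Finset.mem_inter.2 ⟨(Finset.mem_inter.1 (hWsub h)).1,
            hZ'Z (by simp [hZ']; tauto)⟩
        · exact Finset.mem_inter.2 ⟨(Finset.mem_sdiff.1 (hXsub h)).1,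
            hZ'Z (by simp [hZ']; tauto)⟩
      have hdisj : Disjoint W X := by
        rw [Finset.disjoint_left]
        intro i hiW hiX
        exact (Finset.mem_sdiff.1 (hXsub hiX)).2 (Finset.mem_inter.1 (hWsub hiW)).2
      calc q = W.card + X.card := by rw [hWcard, hXcard]; omega
        _ = (W ∪ X).card := (Finset.card_union_of_disjoint hdisj).symm
        _ ≤ (T ∩ Z).card := Finset.card_le_card hsub
    have hqU : q ≤ (U ∩ stars S).card := by
      rw [hstarsS]
      have hsub : W ∪ Y ⊆ U ∩ Z := by
        intro i hi
        rcases Finset.mem_union.1 hi with h | h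
        · exact Finset.mem_inter.2 ⟨(Finset.mem_inter.1 (hWsub h)).2,
            hZ'Z (by simp [hZ']; tauto)⟩
        · exact Finset.mem_inter.2 ⟨(Finset.mem_sdiff.1 (hYsub h)).1,
            hZ'Z (by simp [hZ']; tauto)⟩
      have hdisj : Disjoint W Y := by
        rw [Finset.disjoint_left]
        intro i hiW hiY
        exact (Finset.mem_sdiff.1 (hYsub hiY)).2 (Finset.mem_inter.1 (hWsub hiW)).1
      calc q = W.card + Y.card := by rw [hWcard, hYcard]; omega
        _ = (W ∪ Y).card := (Finset.card_union_of_disjoint hdisj).symm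
        _ ≤ (U ∩ Z).card := Finset.card_le_card hsub
    exact ⟨S, by rw [faceDim_eq_card_stars, hstarsS, hZcard],
      ⟨hcD, hqT⟩, ⟨hcF, hqU⟩⟩
end

section
/- Let D, F be k-faces of the n-cube, j = |I_D ∩ I_F| the number of shared star-coordinates, and m the number of coordinates outside I_D ∪ I_F where D and F differ. Define ρ_q(D,F) = m + 2q - min{q,j}. Then D and F are adjacent in Q(n,k,p,q) if and only if ρ_q(D,F) ≤ p. -/
/-- The number of shared star coordinates `j = |I_D ∩ I_F|` of two faces. -/
def sharedStars {n : ℕ} (D F : Fin n → Option Bool) : ℕ :=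
  (stars D ∩ stars F).card

/-- The number `m` of coordinates outside `I_D ∪ I_F` where `D` and `F`
carry different bits. -/
def mism {n : ℕ} (D F : Fin n → Option Bool) : ℕ :=
  (Finset.univ.filter (fun p => D p ≠ none ∧ F p ≠ none ∧ D p ≠ F p)).card

/-- The gap function `ρ_q(D,F) = m + 2q - min{q, j}`. -/
def rho {n : ℕ} (q : ℕ) (D F : Fin n → Option Bool) : ℕ :=
  mism D F + 2 * q - min q (sharedStars D F)

/-- Two distinct `k`-faces `D`, `F` of the `n`-cube are adjacent in
`Q(n,k,p,q)` if and only if `ρ_q(D,F) ≤ p`. -/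
theorem stmt_8 (n k p q : ℕ) (hq : q ≤ p) (hp : p ≤ k) (hk : k ≤ n)
    (D F : {D : Fin n → Option Bool // faceDim D = k}) (hDF : D ≠ F) :
    (Q n k p q).Adj D F ↔ rho q D.1 F.1 ≤ p := by
  classical
  set A := stars D.1 with hA
  set B := stars F.1 with hB
  set M := Finset.univ.filter (fun i => D.1 i ≠ none ∧ F.1 i ≠ none ∧ D.1 i ≠ F.1 i) with hM
  have hAcard : A.card = k := D.2
  have hBcard : B.card = k := F.2
  have hMA : Disjoint M A := by
    rw [Finset.disjoint_left]
    intro i hi hiA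
    simp only [hM, Finset.mem_filter] at hi
    simp only [hA, stars, Finset.mem_filter, Finset.mem_univ, true_and] at hiA
    exact hi.2.1 hiA
  have hMB : Disjoint M B := by
    rw [Finset.disjoint_left]
    intro i hi hiB
    simp only [hM, Finset.mem_filter] at hi
    simp only [hB, stars, Finset.mem_filter, Finset.mem_univ, true_and] at hiB
    exact hi.2.2.1 hiB
  have hrho : rho q D.1 F.1 = M.card + 2 * q - min q (A ∩ B).card := rfl
  constructor
  · rintro ⟨-, S, hSdim, ⟨hcD, hcDq⟩, ⟨hcF, hcFq⟩⟩
    have hMS : M ⊆ stars S := by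
      intro i hi
      simp only [hM, Finset.mem_filter] at hi
      obtain ⟨-, hd, hf, hne⟩ := hi
      simp only [stars, Finset.mem_filter, Finset.mem_univ, true_and]
      by_contra hS
      obtain ⟨c, hc⟩ := Option.ne_none_iff_exists'.mp hS
      obtain ⟨b, hb⟩ := Option.ne_none_iff_exists'.mp hd
      obtain ⟨b', hb'⟩ := Option.ne_none_iff_exists'.mp hf
      have h1 := hcD i b c hb hc
      have h2 := hcF i b' c hb' hc
      rw [hb, hb', h1, h2] at hne
      exact hne rfl
    have hScard : (stars S).card = p := hSdim
    set X := A ∩ stars S with hX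
    set Y := B ∩ stars S with hY
    have hXq : q ≤ X.card := hcDq
    have hYq : q ≤ Y.card := hcFq
    have hunion : (X ∪ Y).card + (X ∩ Y).card = X.card + Y.card :=
      Finset.card_union_add_card_inter X Y
    have hXYj : (X ∩ Y).card ≤ (A ∩ B).card := by
      apply Finset.card_le_card
      intro i hi
      simp only [hX, hY, Finset.mem_inter] at hi ⊢
      exact ⟨hi.1.1, hi.2.1⟩
    have hXsub : X.card ≤ (X ∪ Y).card := Finset.card_le_card Finset.subset_union_left
    have hdisj : Disjoint M (X ∪ Y) := by
      rw [Finset.disjoint_union_right]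
      exact ⟨hMA.mono_right Finset.inter_subset_left,
        hMB.mono_right Finset.inter_subset_left⟩
    have htot : M.card + (X ∪ Y).card ≤ p := by
      rw [← Finset.card_union_of_disjoint hdisj, ← hScard]
      apply Finset.card_le_card
      rw [Finset.union_subset_iff]
      exact ⟨hMS, Finset.union_subset Finset.inter_subset_right Finset.inter_subset_right⟩
    rw [hrho]
    omega
  · intro hle
    set j := (A ∩ B).card with hj
    have hjk : j ≤ k := by
      rw [hj, ← hAcard]; exact Finset.card_le_card Finset.inter_subset_left
    have hAB : (A \ B).card = k - j := by
      have h1 := Finset.card_sdiff_add_card_inter A B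
      omega
    have hBA : (B \ A).card = k - j := by
      have h1 := Finset.card_sdiff_add_card_inter B A
      rw [Finset.inter_comm] at h1
      omega
    obtain ⟨C1, hC1sub, hC1card⟩ :=
      Finset.exists_subset_card_eq (s := A ∩ B) (n := min q j) (min_le_right q j)
    obtain ⟨C2, hC2sub, hC2card⟩ :=
      Finset.exists_subset_card_eq (s := A \ B) (n := q - min q j) (by omega)
    obtain ⟨C3, hC3sub, hC3card⟩ :=
      Finset.exists_subset_card_eq (s := B \ A) (n := q - min q j) (by omega)
    set Bse := M ∪ (C1 ∪ C2 ∪ C3) with hBse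
    have hd12 : Disjoint C1 C2 := by
      apply Finset.disjoint_left.mpr
      intro i h1 h2
      exact ((Finset.mem_sdiff.mp (hC2sub h2)).2) (Finset.mem_inter.mp (hC1sub h1)).2
    have hd13 : Disjoint C1 C3 := by
      apply Finset.disjoint_left.mpr
      intro i h1 h2
      exact ((Finset.mem_sdiff.mp (hC3sub h2)).2) (Finset.mem_inter.mp (hC1sub h1)).1
    have hd23 : Disjoint C2 C3 := by
      apply Finset.disjoint_left.mpr
      intro i h1 h2
      exact ((Finset.mem_sdiff.mp (hC3sub h2)).2) (Finset.mem_sdiff.mp (hC2sub h1)).1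
    have hC1A : C1 ⊆ A := hC1sub.trans Finset.inter_subset_left
    have hC1B : C1 ⊆ B := hC1sub.trans Finset.inter_subset_right
    have hC2A : C2 ⊆ A := hC2sub.trans (Finset.sdiff_subset)
    have hC3B : C3 ⊆ B := hC3sub.trans (Finset.sdiff_subset)
    have hdM : Disjoint M (C1 ∪ C2 ∪ C3) := by
      rw [Finset.disjoint_union_right, Finset.disjoint_union_right]
      exact ⟨⟨hMA.mono_right hC1A, hMA.mono_right hC2A⟩, hMB.mono_right hC3B⟩
    have hBsecard : Bse.card = M.card + 2 * q - min q j := by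
      rw [hBse, Finset.card_union_of_disjoint hdM,
        Finset.card_union_of_disjoint
          (by rw [Finset.disjoint_union_left]; exact ⟨hd13, hd23⟩),
        Finset.card_union_of_disjoint hd12, hC1card, hC2card, hC3card]
      omega
    have hBsep : Bse.card ≤ p := by rw [hBsecard]; rw [hrho] at hle; omega
    obtain ⟨T, hBT, hTuniv, hTcard⟩ :=
      Finset.exists_subsuperset_card_eq (t := (Finset.univ : Finset (Fin n)))
        (Finset.subset_univ Bse) hBsep (by simp [Fintype.card_fin]; omega)
    set S : Fin n → Option Bool :=
      fun i => if i ∈ T then none else some ((D.1 i).getD ((F.1 i).getD true)) with hS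
    have hstarsS : stars S = T := by
      ext i
      simp only [stars, Finset.mem_filter, Finset.mem_univ, true_and, hS]
      by_cases hi : i ∈ T
      · simp [hi]
      · simp [hi]
    have hSdim : faceDim S = p := by
      have : faceDim S = (stars S).card := rfl
      rw [this, hstarsS, hTcard]
    refine ⟨hDF, S, hSdim, ⟨?_, ?_⟩, ⟨?_, ?_⟩⟩
    · intro i b b' hb hb'
      rw [hS] at hb'
      simp only at hb'
      by_cases hi : i ∈ T
      · simp [hi] at hb'
      · rw [if_neg hi, hb] at hb'
        simpa using hb'
    · rw [hstarsS]
      have : C1 ∪ C2 ⊆ A ∩ T := by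
        intro i hi
        rcases Finset.mem_union.mp hi with h | h
        · exact Finset.mem_inter.mpr ⟨hC1A h, hBT (by simp [hBse, h])⟩
        · exact Finset.mem_inter.mpr ⟨hC2A h, hBT (by simp [hBse, h])⟩
      calc q = (C1 ∪ C2).card := by
              rw [Finset.card_union_of_disjoint hd12, hC1card, hC2card]; omega
        _ ≤ (A ∩ T).card := Finset.card_le_card this
    · intro i b b' hb hb'
      rw [hS] at hb'
      simp only at hb'
      by_cases hi : i ∈ T
      · simp [hi] at hb'
      · rw [if_neg hi] at hb'
        cases hd : D.1 i with
        | none => rw [hd, hb] at hb'; simpa using hb'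
        | some c =>
          have hDF' : D.1 i = F.1 i := by
            by_contra hne
            have : i ∈ M := by
              simp only [hM, Finset.mem_filter, Finset.mem_univ, true_and]
              exact ⟨by simp [hd], by simp [hb], hne⟩
            exact hi (hBT (by simp [hBse, this]))
          have hcb : c = b := by rw [hd, hb] at hDF'; exact Option.some.inj hDF'
          rw [hd] at hb'
          simp only [Option.getD_some, Option.some.injEq] at hb'
          rw [← hcb, hb']
    · rw [hstarsS]
      have : C1 ∪ C3 ⊆ B ∩ T := by
        intro i hi
        rcases Finset.mem_union.mp hi with h | h
        · exact Finset.mem_inter.mpr ⟨hC1B h, hBT (by simp [hBse, h])⟩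
        · exact Finset.mem_inter.mpr ⟨hC3B h, hBT (by simp [hBse, h])⟩
      calc q = (C1 ∪ C3).card := by
              rw [Finset.card_union_of_disjoint hd13, hC1card, hC3card]; omega
        _ ≤ (B ∩ T).card := Finset.card_le_card this
end

section
/- For n ≥ 5, the graph Q(n,3,3,2) is regular of degree 12(n-3)(n-4) + 7(n-3), and it is complete for n ≤ 4. -/
instance {n : ℕ} (D S : Fin n → Option Bool) : Decidable (compatible D S) := by
  unfold compatible; infer_instance

instance {n : ℕ} (q : ℕ) (D S : Fin n → Option Bool) : Decidable (meets q D S) := by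
  unfold meets; infer_instance

namespace Qaux
open Finset
variable {n : ℕ}
lemma mem_stars {D : Fin n → Option Bool} {p : Fin n} : p ∈ stars D ↔ D p = none := by
  simp [stars]
def diffs (D F : Fin n → Option Bool) : Finset (Fin n) :=
  Finset.univ.filter (fun p => D p ≠ none ∧ F p ≠ none ∧ D p ≠ F p)
lemma mem_diffs {D F : Fin n → Option Bool} {p : Fin n} :
    p ∈ diffs D F ↔ D p ≠ none ∧ F p ≠ none ∧ D p ≠ F p := by
  simp [diffs]
def crit (D F : Fin n → Option Bool) : Prop :=
  (2 ≤ (stars D ∩ stars F).card ∧ (diffs D F).card ≤ 1) ∨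
  ((stars D ∩ stars F).card = 1 ∧ diffs D F = ∅)

lemma construct {D F : Fin n → Option Bool} (C : Finset (Fin n))
    (hC : C.card = 3) (hA : 2 ≤ (C ∩ stars D).card) (hB : 2 ≤ (C ∩ stars F).card)
    (hd : diffs D F ⊆ C) :
    ∃ S : Fin n → Option Bool, faceDim S = 3 ∧ meets 2 D S ∧ meets 2 F S := by
  classical
  set S : Fin n → Option Bool := fun q => if q ∈ C then none else if D q ≠ none then D q else
      if F q ≠ none then F q else some false with hSdef
  have hstars : stars S = C := by
    ext q
    by_cases hq : q ∈ C <;> by_cases h1 : D q = none <;> by_cases h2 : F q = none <;>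
      simp_all [mem_stars, S]
  refine ⟨S, ?_, ⟨?_, ?_⟩, ⟨?_, ?_⟩⟩
  · show (stars S).card = 3
    rw [hstars, hC]
  · intro p b b' hb hb'
    have hp : p ∉ C := by
      intro h; rw [show S p = none by simp [S, h]] at hb'; exact Option.some_ne_none b' hb'.symm
    have : S p = D p := by simp [S, hp, hb]
    rw [this, hb] at hb'; exact Option.some.inj hb'
  · rw [hstars, inter_comm]; exact hA
  · intro p b b' hb hb'
    have hp : p ∉ C := by
      intro h; rw [show S p = none by simp [S, h]] at hb'; exact Option.some_ne_none b' hb'.symm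
    by_cases h1 : D p = none
    · have : S p = F p := by simp [S, hp, h1, hb]
      rw [this, hb] at hb'; exact Option.some.inj hb'
    · have : S p = D p := by simp [S, hp, h1]
      have hDF : D p = F p := by
        by_contra hne
        exact hp (hd (mem_diffs.2 ⟨h1, by simp [hb], hne⟩))
      rw [this, hDF, hb] at hb'; exact Option.some.inj hb'
  · rw [hstars, inter_comm]; exact hB


lemma forward {D F : Fin n → Option Bool} (hD : faceDim D = 3)
    (h : ∃ S : Fin n → Option Bool, faceDim S = 3 ∧ meets 2 D S ∧ meets 2 F S) :
    crit D F := by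
  obtain ⟨S, hS, ⟨hcD, h2D⟩, ⟨hcF, h2F⟩⟩ := h
  set C := stars S with hCdef
  set A := stars D with hAdef
  set B := stars F with hBdef
  have hCcard : C.card = 3 := hS
  have h2A : 2 ≤ (C ∩ A).card := by rwa [inter_comm]
  have h2B : 2 ≤ (C ∩ B).card := by rwa [inter_comm]
  -- diffs ⊆ C
  have hdC : diffs D F ⊆ C := by
    intro p hp
    rw [mem_diffs] at hp
    by_contra hpc
    obtain ⟨c, hc⟩ := Option.ne_none_iff_exists'.mp (fun h0 : S p = none => hpc (mem_stars.2 h0))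
    obtain ⟨b, hb⟩ := Option.ne_none_iff_exists'.mp hp.1
    obtain ⟨b', hb'⟩ := Option.ne_none_iff_exists'.mp hp.2.1
    have e1 := hcD p b c hb hc
    have e2 := hcF p b' c hb' hc
    exact hp.2.2 (by rw [hb, hb', e1, e2])
  -- diffs disjoint from A
  have hdA : ∀ p ∈ diffs D F, p ∉ A := by
    intro p hp hpA
    exact (mem_diffs.mp hp).1 (mem_stars.mp hpA)
  have hdB : ∀ p ∈ diffs D F, p ∉ B := by
    intro p hp hpB
    exact (mem_diffs.mp hp).2.1 (mem_stars.mp hpB)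
  -- diffs card ≤ 1
  have hdsub : diffs D F ⊆ C \ (C ∩ A) := by
    intro p hp
    rw [mem_sdiff, mem_inter]
    exact ⟨hdC hp, fun h => hdA p hp h.2⟩
  have hdcard : (diffs D F).card ≤ 1 := by
    calc (diffs D F).card ≤ (C \ (C ∩ A)).card := card_le_card hdsub
    _ = C.card - (C ∩ A).card := card_sdiff_of_subset inter_subset_left
    _ ≤ 1 := by omega
  -- t ≥ 1
  have hsub : (C ∩ A) ∪ (C ∩ B) ⊆ C := union_subset inter_subset_left inter_subset_left
  have hkey := card_union_add_card_inter (C ∩ A) (C ∩ B)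
  have hint : (C ∩ A) ∩ (C ∩ B) ⊆ A ∩ B := by
    intro p hp; simp only [mem_inter] at hp ⊢; exact ⟨hp.1.2, hp.2.2⟩
  have ht1 : 1 ≤ (A ∩ B).card := by
    have := card_le_card hsub
    have := card_le_card hint
    omega
  by_cases ht : 2 ≤ (A ∩ B).card
  · exact Or.inl ⟨ht, hdcard⟩
  · have htone : (A ∩ B).card = 1 := by omega
    refine Or.inr ⟨htone, ?_⟩
    -- C ⊆ A ∪ B
    have hCAB : C ⊆ A ∪ B := by
      have hle : (C ∩ A ∩ (C ∩ B)).card ≤ 1 := le_trans (card_le_card hint) (le_of_eq htone)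
      have h3 : 3 ≤ ((C ∩ A) ∪ (C ∩ B)).card := by
        have := card_le_card hsub
        omega
      have : C = (C ∩ A) ∪ (C ∩ B) := (eq_of_subset_of_card_le hsub (by omega)).symm
      rw [this]
      exact union_subset_union inter_subset_right inter_subset_right
    rw [eq_empty_iff_forall_notMem]
    intro p hp
    rcases mem_union.mp (hCAB (hdC hp)) with h | h
    · exact hdA p hp h
    · exact hdB p hp h

lemma backward {D F : Fin n → Option Bool} (hD : faceDim D = 3) (hF : faceDim F = 3)
    (h : crit D F) :
    ∃ S : Fin n → Option Bool, faceDim S = 3 ∧ meets 2 D S ∧ meets 2 F S := by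
  classical
  set A := stars D with hAdef
  set B := stars F with hBdef
  have hAcard : A.card = 3 := hD
  have hBcard : B.card = 3 := hF
  rcases h with ⟨h2, he⟩ | ⟨h1, hemp⟩
  · obtain ⟨x, hx, y, hy, hxy⟩ := Finset.one_lt_card.mp h2
    have hxA : x ∈ A := (mem_inter.mp hx).1
    have hyA : y ∈ A := (mem_inter.mp hy).1
    have hxB : x ∈ B := (mem_inter.mp hx).2
    have hyB : y ∈ B := (mem_inter.mp hy).2
    -- choose z
    have hz : ∃ z : Fin n, z ≠ x ∧ z ≠ y ∧ diffs D F ⊆ {x, y, z} := by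
      by_cases hne : (diffs D F).Nonempty
      · obtain ⟨z, hzmem⟩ := hne
        have hzA : z ∉ A := fun h => (mem_diffs.mp hzmem).1 (mem_stars.mp h)
        refine ⟨z, fun h => hzA (h ▸ hxA), fun h => hzA (h ▸ hyA), ?_⟩
        intro p hp
        have : p = z := Finset.card_le_one.mp he p hp z hzmem
        simp [this]
      · have hempty : diffs D F = ∅ := not_nonempty_iff_eq_empty.mp hne
        have hns : ¬ ((univ : Finset (Fin n)) ⊆ {x, y}) := by
          intro hsub
          have h2c : ({x, y} : Finset (Fin n)).card ≤ 2 := card_insert_le _ _ |>.trans (by simp)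
          have h3n : 3 ≤ (univ : Finset (Fin n)).card := hAcard ▸ card_le_card (subset_univ A)
          have := card_le_card hsub
          omega
        obtain ⟨z, _, hzxy⟩ := Finset.not_subset.mp hns
        simp only [mem_insert, mem_singleton, not_or] at hzxy
        exact ⟨z, hzxy.1, hzxy.2, by simp [hempty]⟩
    obtain ⟨z, hzx, hzy, hdsub⟩ := hz
    have hCcard : ({x, y, z} : Finset (Fin n)).card = 3 := by
      rw [card_insert_of_notMem (by simp [hxy, Ne.symm hzx]),
        card_insert_of_notMem (by simp [Ne.symm hzy]), card_singleton]
    refine construct {x, y, z} hCcard ?_ ?_ hdsub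
    · calc 2 = ({x, y} : Finset (Fin n)).card := (card_pair hxy).symm
      _ ≤ _ := card_le_card (by
          intro p hp
          rcases mem_insert.mp hp with rfl | hp
          · exact mem_inter.mpr ⟨by simp, hxA⟩
          · rw [mem_singleton] at hp; subst hp
            exact mem_inter.mpr ⟨by simp, hyA⟩)
    · calc 2 = ({x, y} : Finset (Fin n)).card := (card_pair hxy).symm
      _ ≤ _ := card_le_card (by
          intro p hp
          rcases mem_insert.mp hp with rfl | hp
          · exact mem_inter.mpr ⟨by simp, hxB⟩
          · rw [mem_singleton] at hp; subst hp
            exact mem_inter.mpr ⟨by simp, hyB⟩)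
  · obtain ⟨x, hxeq⟩ := Finset.card_eq_one.mp h1
    have hxA : x ∈ A := (mem_inter.mp (hxeq ▸ mem_singleton_self x)).1
    have hxB : x ∈ B := (mem_inter.mp (hxeq ▸ mem_singleton_self x)).2
    have haer : (A.erase x).Nonempty := by
      rw [← card_pos, card_erase_of_mem hxA]; omega
    obtain ⟨a, ha⟩ := haer
    have haA : a ∈ A := mem_of_mem_erase ha
    have hax : a ≠ x := ne_of_mem_erase ha
    have haB : a ∉ B := by
      intro h
      have : a ∈ stars D ∩ stars F := mem_inter.mpr ⟨haA, h⟩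
      rw [hxeq, mem_singleton] at this
      exact hax this
    have hber : (B.erase x).Nonempty := by
      rw [← card_pos, card_erase_of_mem hxB]; omega
    obtain ⟨b, hb⟩ := hber
    have hbB : b ∈ B := mem_of_mem_erase hb
    have hbx : b ≠ x := ne_of_mem_erase hb
    have hab : a ≠ b := fun h => haB (h ▸ hbB)
    have hCcard : ({x, a, b} : Finset (Fin n)).card = 3 := by
      rw [card_insert_of_notMem (by simp [Ne.symm hax, Ne.symm hbx]),
        card_insert_of_notMem (by simp [hab]), card_singleton]
    refine construct {x, a, b} hCcard ?_ ?_ (by simp [hemp])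
    · calc 2 = ({x, a} : Finset (Fin n)).card := (card_pair (Ne.symm hax)).symm
      _ ≤ _ := card_le_card (by
          intro p hp
          rcases mem_insert.mp hp with rfl | hp
          · exact mem_inter.mpr ⟨by simp, hxA⟩
          · rw [mem_singleton] at hp; subst hp
            exact mem_inter.mpr ⟨by simp, haA⟩)
    · calc 2 = ({x, b} : Finset (Fin n)).card := (card_pair (Ne.symm hbx)).symm
      _ ≤ _ := card_le_card (by
          intro p hp
          rcases mem_insert.mp hp with rfl | hp
          · exact mem_inter.mpr ⟨by simp, hxB⟩
          · rw [mem_singleton] at hp; subst hp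
            exact mem_inter.mpr ⟨by simp, hbB⟩)

lemma map_not_ne {o : Option Bool} (h : o ≠ none) : o.map (fun b => !b) ≠ o := by
  obtain ⟨c, rfl⟩ := Option.ne_none_iff_exists'.mp h
  simp

/-- flip one fixed coordinate -/
def flipAt (D : Fin n → Option Bool) (p : Fin n) : Fin n → Option Bool :=
  fun q => if q = p then (D q).map (fun b => !b) else D q

def m2 (D : Fin n → Option Bool) (z : Fin n × Fin n × Bool × Fin n) :
    Fin n → Option Bool :=
  fun q => if q = z.1 then some z.2.2.1 else if q = z.2.1 then none
    else if q = z.2.2.2 then (D q).map (fun b => !b) else D q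

/-- the two elements of `A.erase x` -/
def e1 (A : Finset (Fin n)) (x : Fin n) : Fin n := WithTop.untopD x (A.erase x).min
def e2 (A : Finset (Fin n)) (x : Fin n) : Fin n := WithBot.unbotD x (A.erase x).max

def m1 (D : Fin n → Option Bool) (z : Fin n × Finset (Fin n) × Bool × Bool) :
    Fin n → Option Bool :=
  fun q => if q = z.1 ∨ q ∈ z.2.1 then none
    else if q = e1 (stars D) z.1 then some z.2.2.1
    else if q = e2 (stars D) z.1 then some z.2.2.2
    else D q

lemma erase_spec {A : Finset (Fin n)} (hA : A.card = 3) {x : Fin n} (hx : x ∈ A) :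
    A.erase x = {e1 A x, e2 A x} ∧ e1 A x < e2 A x := by
  have hc : (A.erase x).card = 2 := by rw [card_erase_of_mem hx, hA]
  have hne : (A.erase x).Nonempty := by rw [← card_pos, hc]; omega
  have he1 : e1 A x = (A.erase x).min' hne := by
    rw [e1, ← Finset.coe_min' hne, WithTop.untopD_coe]
  have he2 : e2 A x = (A.erase x).max' hne := by
    rw [e2, ← Finset.coe_max' hne, WithBot.unbotD_coe]
  have hlt : e1 A x < e2 A x := by
    rw [he1, he2]; exact Finset.min'_lt_max'_of_card _ (by omega)
  refine ⟨?_, hlt⟩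
  have hsub : ({e1 A x, e2 A x} : Finset (Fin n)) ⊆ A.erase x := by
    intro q hq
    rcases mem_insert.mp hq with rfl | hq
    · rw [he1]; exact min'_mem _ _
    · rw [mem_singleton] at hq; subst hq; rw [he2]; exact max'_mem _ _
  exact ((eq_of_subset_of_card_le hsub (by rw [hc, card_pair hlt.ne])).symm)

lemma A_decomp {A : Finset (Fin n)} (hA : A.card = 3) {x : Fin n} (hx : x ∈ A) :
    A = {x, e1 A x, e2 A x} := by
  obtain ⟨hp, _⟩ := erase_spec hA hx
  rw [← hp, insert_erase hx]

-- the three families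
def N3 (D : Fin n → Option Bool) : Finset (Fin n → Option Bool) :=
  ((stars D)ᶜ).image (flipAt D)
def P2 (D : Fin n → Option Bool) : Finset (Fin n × Fin n × Bool × Fin n) :=
  stars D ×ˢ (stars D)ᶜ ×ˢ (univ : Finset Bool) ×ˢ (stars D)ᶜ
def N2 (D : Fin n → Option Bool) : Finset (Fin n → Option Bool) :=
  (P2 D).image (m2 D)
def P1 (D : Fin n → Option Bool) : Finset (Fin n × Finset (Fin n) × Bool × Bool) :=
  stars D ×ˢ ((stars D)ᶜ.powersetCard 2) ×ˢ (univ : Finset (Bool × Bool))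
def N1 (D : Fin n → Option Bool) : Finset (Fin n → Option Bool) :=
  (P1 D).image (m1 D)

section Props
variable {D : Fin n → Option Bool} (hD : faceDim D = 3)

-- stars computations
lemma stars_flipAt {p : Fin n} (hp : p ∉ stars D) : stars (flipAt D p) = stars D := by
  ext q
  simp only [mem_stars, flipAt]
  rcases eq_or_ne q p with rfl | h
  · simp only [if_pos rfl]
    obtain ⟨c, hc⟩ := Option.ne_none_iff_exists'.mp (fun h0 => hp (mem_stars.2 h0))
    simp [hc]
  · rw [if_neg h]

lemma stars_m2 {a b : Fin n} {v : Bool} {w : Fin n} (ha : a ∈ stars D)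
    (hb : b ∉ stars D) (hw : w ∉ stars D) :
    stars (m2 D (a, b, v, w)) = insert b ((stars D).erase a) := by
  have hDb := fun h0 => hb (mem_stars.2 h0)
  have hDw := fun h0 => hw (mem_stars.2 h0)
  ext q
  simp only [mem_stars, m2, mem_insert, mem_erase]
  rcases eq_or_ne q a with rfl | hqa
  · simp only [if_pos rfl]
    have hqb : q ≠ b := fun h => hb (h ▸ ha)
    simp [hqb, mem_stars.mp ha]
  · rw [if_neg hqa]
    rcases eq_or_ne q b with rfl | hqb
    · simp [hDb]
    · rw [if_neg hqb]
      rcases eq_or_ne q w with rfl | hqw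
      · simp only [if_pos rfl]
        obtain ⟨c, hc⟩ := Option.ne_none_iff_exists'.mp hDw
        simp [hc, hqb, hqa, hDw]
      · rw [if_neg hqw]
        simp [hqb, hqa, mem_stars]

lemma stars_m1 {x : Fin n} {P : Finset (Fin n)} {g : Bool × Bool}
    (hx : x ∈ stars D) (hP : P ⊆ (stars D)ᶜ) (hA3 : (stars D).card = 3) :
    stars (m1 D (x, P, g)) = insert x P := by
  have hd := A_decomp hA3 hx
  have he1m : e1 (stars D) x ∈ (stars D).erase x := by
    rw [(erase_spec hA3 hx).1]; exact mem_insert_self _ _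
  have he2m : e2 (stars D) x ∈ (stars D).erase x := by
    rw [(erase_spec hA3 hx).1]; exact mem_insert_of_mem (mem_singleton_self _)
  ext q
  simp only [mem_stars, m1, mem_insert]
  by_cases h0 : q = x ∨ q ∈ P
  · simpa [h0] using h0
  · rw [if_neg h0]
    push_neg at h0
    rcases eq_or_ne q (e1 (stars D) x) with rfl | h1
    · simp only [if_pos rfl]
      constructor
      · intro h; exact absurd h (by simp)
      · intro h; exact absurd h (by tauto)
    · rw [if_neg h1]
      rcases eq_or_ne q (e2 (stars D) x) with rfl | h2
      · simp only [if_pos rfl]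
        constructor
        · intro h; exact absurd h (by simp)
        · intro h; exact absurd h (by tauto)
      · rw [if_neg h2]
        constructor
        · intro h
          have : q ∈ stars D := mem_stars.2 h
          rw [hd] at this
          simp only [mem_insert, mem_singleton] at this
          tauto
        · intro h; tauto

end Props
end Qaux

namespace Qaux2
open Finset Qaux
variable {n : ℕ} {D : Fin n → Option Bool}

lemma bool_flip {c c' : Bool} (h : c ≠ c') : !c = c' := by
  cases c <;> cases c' <;> simp_all

lemma faceDim_eq_stars_card (F : Fin n → Option Bool) : faceDim F = (stars F).card := rfl

lemma mem_N3_props (hD : faceDim D = 3) {F : Fin n → Option Bool} (hF : F ∈ N3 D) :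
    faceDim F = 3 ∧ F ≠ D ∧ crit D F ∧ (stars D ∩ stars F).card = 3 := by
  obtain ⟨p, hp, rfl⟩ := mem_image.mp hF
  rw [mem_compl] at hp
  have hDp : D p ≠ none := fun h => hp (mem_stars.2 h)
  have hst := stars_flipAt (D := D) (p := p) hp
  have hflip : flipAt D p p = (D p).map (fun b => !b) := by simp [flipAt]
  have hdiffs : diffs D (flipAt D p) = {p} := by
    ext q
    simp only [mem_diffs, mem_singleton]
    constructor
    · rintro ⟨h1, h2, h3⟩
      by_contra hqp
      exact h3 (by simp [flipAt, hqp])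
    · rintro rfl
      refine ⟨hDp, ?_, ?_⟩
      · rw [hflip]
        obtain ⟨c, hc⟩ := Option.ne_none_iff_exists'.mp hDp
        simp [hc]
      · exact fun h => map_not_ne hDp (hflip ▸ h.symm)
  refine ⟨?_, ?_, ?_, ?_⟩
  · rw [faceDim_eq_stars_card, hst]; exact hD
  · intro h
    exact map_not_ne hDp (hflip ▸ congrFun h p)
  · exact Or.inl ⟨by rw [hst, inter_self, show (stars D).card = 3 from hD]; omega,
      by rw [hdiffs, card_singleton]⟩
  · rw [hst, inter_self]; exact hD

lemma mem_N2_props (hD : faceDim D = 3) {F : Fin n → Option Bool} (hF : F ∈ N2 D) :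
    faceDim F = 3 ∧ F ≠ D ∧ crit D F ∧ (stars D ∩ stars F).card = 2 := by
  obtain ⟨⟨a, b, v, w⟩, hz, rfl⟩ := mem_image.mp hF
  simp only [P2, mem_product] at hz
  obtain ⟨ha, hb, -, hw⟩ := hz
  rw [mem_compl] at hb hw
  have hab : a ≠ b := fun h => hb (h ▸ ha)
  have hDb : D b ≠ none := fun h => hb (mem_stars.2 h)
  have hst := stars_m2 (D := D) (v := v) ha hb hw
  have hinter : stars D ∩ stars (m2 D (a, b, v, w)) = (stars D).erase a := by
    rw [hst]
    ext q
    simp only [mem_inter, mem_insert, mem_erase]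
    constructor
    · rintro ⟨hq, h | h⟩
      · exact absurd (h ▸ hq) hb
      · exact ⟨h.1, hq⟩
    · rintro ⟨h1, h2⟩
      exact ⟨h2, Or.inr ⟨h1, h2⟩⟩
  have hcard2 : ((stars D).erase a).card = 2 := by
    rw [card_erase_of_mem ha, show (stars D).card = 3 from hD]
  have hmb : m2 D (a, b, v, w) b = none := by simp [m2, Ne.symm hab]
  have hdiffs : diffs D (m2 D (a, b, v, w)) ⊆ {w} := by
    intro q hq
    rw [mem_diffs] at hq
    obtain ⟨h1, h2, h3⟩ := hq
    have hqa : q ≠ a := fun h => h1 (h ▸ mem_stars.mp ha)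
    have hqb : q ≠ b := fun h => h2 (h ▸ hmb)
    rw [mem_singleton]
    by_contra hqw
    exact h3 (by simp [m2, hqa, hqb, hqw])
  refine ⟨?_, ?_, ?_, ?_⟩
  · rw [faceDim_eq_stars_card, hst, card_insert_of_notMem (fun h => hb (mem_of_mem_erase h)),
      hcard2]
  · intro h
    exact hDb (by rw [← hmb, h])
  · refine Or.inl ⟨by rw [hinter, hcard2], ?_⟩
    calc (diffs D (m2 D (a, b, v, w))).card ≤ ({w} : Finset (Fin n)).card :=
      card_le_card hdiffs
    _ = 1 := card_singleton _
  · rw [hinter, hcard2]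

lemma mem_N1_props (hD : faceDim D = 3) {F : Fin n → Option Bool} (hF : F ∈ N1 D) :
    faceDim F = 3 ∧ F ≠ D ∧ crit D F ∧ (stars D ∩ stars F).card = 1 := by
  obtain ⟨⟨x, P, g⟩, hz, rfl⟩ := mem_image.mp hF
  simp only [P1, mem_product] at hz
  obtain ⟨hx, hP, -⟩ := hz
  rw [mem_powersetCard] at hP
  obtain ⟨hPsub, hPcard⟩ := hP
  have hxP : x ∉ P := fun h => (mem_compl.mp (hPsub h)) hx
  have hst := stars_m1 (g := g) hx hPsub hD
  obtain ⟨b, hbP⟩ : P.Nonempty := by rw [← card_pos, hPcard]; omega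
  have hbA : b ∉ stars D := mem_compl.mp (hPsub hbP)
  have hDb : D b ≠ none := fun h => hbA (mem_stars.2 h)
  have hmb : m1 D (x, P, g) b = none := by simp [m1, hbP]
  have he1e : e1 (stars D) x ∈ (stars D).erase x := by
    rw [(erase_spec (show (stars D).card = 3 from hD) hx).1]; exact mem_insert_self _ _
  have he2e : e2 (stars D) x ∈ (stars D).erase x := by
    rw [(erase_spec (show (stars D).card = 3 from hD) hx).1]; exact mem_insert_of_mem (mem_singleton_self _)
  have he1A : e1 (stars D) x ∈ stars D := mem_of_mem_erase he1e
  have he2A : e2 (stars D) x ∈ stars D := mem_of_mem_erase he2e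
  have hinter : stars D ∩ stars (m1 D (x, P, g)) = {x} := by
    rw [hst]
    ext q
    simp only [mem_inter, mem_insert, mem_singleton]
    constructor
    · rintro ⟨hq, h | h⟩
      · exact h
      · exact absurd hq (mem_compl.mp (hPsub h))
    · rintro rfl
      exact ⟨hx, Or.inl rfl⟩
  have hdiffs : diffs D (m1 D (x, P, g)) = ∅ := by
    rw [eq_empty_iff_forall_notMem]
    intro q hq
    rw [mem_diffs] at hq
    obtain ⟨h1, h2, h3⟩ := hq
    have hqA : q ∉ stars D := fun h => h1 (mem_stars.mp h)
    have hq1 : q ≠ e1 (stars D) x := fun h => hqA (h ▸ he1A)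
    have hq2 : q ≠ e2 (stars D) x := fun h => hqA (h ▸ he2A)
    have hqx : q ≠ x := fun h => hqA (h ▸ hx)
    have hqP : q ∉ P := fun h => h2 (by simp [m1, h])
    exact h3 (by simp [m1, hqx, hqP, hq1, hq2])
  refine ⟨?_, ?_, ?_, ?_⟩
  · rw [faceDim_eq_stars_card, hst, card_insert_of_notMem hxP, hPcard]
  · intro h
    exact hDb (by rw [← hmb, h])
  · exact Or.inr ⟨by rw [hinter, card_singleton], hdiffs⟩
  · rw [hinter, card_singleton]

end Qaux2

namespace Qaux3
open Finset Qaux Qaux2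
variable {n : ℕ} {D : Fin n → Option Bool}

lemma classify (hD : faceDim D = 3) {F : Fin n → Option Bool} (hF : faceDim F = 3)
    (hne : F ≠ D) (hc : crit D F) : F ∈ N3 D ∪ N2 D ∪ N1 D := by
  classical
  have hA : (stars D).card = 3 := hD
  have hB : (stars F).card = 3 := hF
  rcases hc with ⟨h2, he⟩ | ⟨h1, hemp⟩
  · -- t ≥ 2
    have ht3 : (stars D ∩ stars F).card ≤ 3 := le_trans (card_le_card inter_subset_left) hA.le
    by_cases hAB : (stars D ∩ stars F).card = 3
    · -- t = 3 : A = B, F = flipAt D p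
      have hABeq : stars D ∩ stars F = stars D :=
        eq_of_subset_of_card_le inter_subset_left (by omega)
      have hsub : stars D ⊆ stars F := by
        rw [← hABeq]; exact inter_subset_right
      have hBA : stars D = stars F := eq_of_subset_of_card_le hsub (by omega)
      obtain ⟨p, hp⟩ := Function.ne_iff.mp hne
      have hDp : D p ≠ none := by
        intro h
        have : p ∈ stars F := hBA ▸ mem_stars.2 h
        exact hp ((mem_stars.mp this).trans h.symm)
      have hFp : F p ≠ none := by
        intro h
        have : p ∈ stars D := hBA.symm ▸ mem_stars.2 h
        exact hp (h.trans (mem_stars.mp this).symm)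
      have hpd : p ∈ diffs D F := Qaux.mem_diffs.2 ⟨hDp, hFp, fun h => hp h.symm⟩
      refine mem_union_left _ (mem_union_left _ (mem_image.2 ⟨p, mem_compl.2 (fun h => hDp (mem_stars.mp h)), ?_⟩))
      funext q
      rcases eq_or_ne q p with rfl | hqp
      · obtain ⟨c, hcq⟩ := Option.ne_none_iff_exists'.mp hDp
        obtain ⟨c', hcq'⟩ := Option.ne_none_iff_exists'.mp hFp
        have hcc : c ≠ c' := by
          intro h; exact hp (by rw [hcq, hcq', h])
        simp only [flipAt, if_pos rfl, hcq, hcq', Option.map_some]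
        cases c <;> cases c' <;> simp_all
      · simp only [flipAt, if_neg hqp]
        by_cases hqA : q ∈ stars D
        · rw [mem_stars.mp hqA, (mem_stars.mp (hBA ▸ hqA)).symm]
        · have hqd : q ∉ diffs D F := by
            intro h
            have := Finset.card_le_one.mp he q h p hpd
            exact hqp this
          rw [Qaux.mem_diffs] at hqd
          push_neg at hqd
          have hDq : D q ≠ none := fun h => hqA (mem_stars.2 h)
          have hFq : F q ≠ none := by
            intro h
            exact hqA (hBA ▸ mem_stars.2 h)
          exact hqd hDq hFq
    · -- t = 2
      have ht2 : (stars D ∩ stars F).card = 2 := by omega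
      have hsdA : (stars D \ stars F).card = 1 := by
        have := card_sdiff_add_card_inter (stars D) (stars F)
        omega
      have hsdB : (stars F \ stars D).card = 1 := by
        have := card_sdiff_add_card_inter (stars F) (stars D)
        rw [inter_comm] at this
        omega
      obtain ⟨a, hae⟩ := card_eq_one.mp hsdA
      obtain ⟨b, hbe⟩ := card_eq_one.mp hsdB
      have haA : a ∈ stars D := (mem_sdiff.mp (hae ▸ mem_singleton_self a)).1
      have haB : a ∉ stars F := (mem_sdiff.mp (hae ▸ mem_singleton_self a)).2
      have hbB : b ∈ stars F := (mem_sdiff.mp (hbe ▸ mem_singleton_self b)).1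
      have hbA : b ∉ stars D := (mem_sdiff.mp (hbe ▸ mem_singleton_self b)).2
      have hab : a ≠ b := fun h => hbA (h ▸ haA)
      have hFa : F a ≠ none := fun h => haB (mem_stars.2 h)
      obtain ⟨v, hva⟩ := Option.ne_none_iff_exists'.mp hFa
      -- choose w
      obtain ⟨w, hwA, hdsub, hwdif⟩ :
          ∃ w, w ∉ stars D ∧ diffs D F ⊆ {w} ∧ (w ≠ b → w ∈ diffs D F) := by
        by_cases hdne : (diffs D F).Nonempty
        · obtain ⟨w, hw⟩ := hdne
          refine ⟨w, fun h => (Qaux.mem_diffs.mp hw).1 (mem_stars.mp h), ?_, fun _ => hw⟩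
          intro q hq
          rw [mem_singleton]
          exact Finset.card_le_one.mp he q hq w hw
        · exact ⟨b, hbA, by rw [not_nonempty_iff_eq_empty.mp hdne]; exact empty_subset _,
            fun h => absurd rfl h⟩
      refine mem_union_left _ (mem_union_right _ (mem_image.2 ⟨(a, b, v, w), ?_, ?_⟩))
      · simp only [P2, mem_product, mem_compl]
        exact ⟨haA, hbA, mem_univ _, hwA⟩
      · funext q
        rcases eq_or_ne q a with rfl | hqa
        · simp [m2, hva.symm]
        rcases eq_or_ne q b with rfl | hqb
        · simp [m2, hqa, mem_stars.mp hbB]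
        simp only [m2, if_neg hqa, if_neg hqb]
        rcases eq_or_ne q w with rfl | hqw
        · simp only [if_pos rfl]
          have hwd : q ∈ diffs D F := hwdif hqb
          rw [Qaux.mem_diffs] at hwd
          obtain ⟨h1, h2, h3⟩ := hwd
          obtain ⟨c, hcq⟩ := Option.ne_none_iff_exists'.mp h1
          obtain ⟨c', hcq'⟩ := Option.ne_none_iff_exists'.mp h2
          have hcc : c ≠ c' := fun h => h3 (by rw [hcq, hcq', h])
          rw [hcq, hcq']
          cases c <;> cases c' <;> simp_all
        · rw [if_neg hqw]
          by_cases hqA : q ∈ stars D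
          · -- q ∈ A, q ≠ a so q ∈ A ∩ B
            have hqB : q ∈ stars F := by
              by_contra hqB
              have : q ∈ stars D \ stars F := mem_sdiff.mpr ⟨hqA, hqB⟩
              rw [hae, mem_singleton] at this
              exact hqa this
            rw [mem_stars.mp hqA, mem_stars.mp hqB]
          · have hDq : D q ≠ none := fun h => hqA (mem_stars.2 h)
            have hqB : q ∉ stars F := by
              intro hqB
              have : q ∈ stars F \ stars D := mem_sdiff.mpr ⟨hqB, hqA⟩
              rw [hbe, mem_singleton] at this
              exact hqb this
            have hFq : F q ≠ none := fun h => hqB (mem_stars.2 h)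
            have hqd : q ∉ diffs D F := fun h => hqw (mem_singleton.mp (hdsub h))
            rw [Qaux.mem_diffs] at hqd
            push_neg at hqd
            exact hqd hDq hFq
  · -- t = 1
    obtain ⟨x, hxeq⟩ := card_eq_one.mp h1
    have hxA : x ∈ stars D := (mem_inter.mp (hxeq ▸ mem_singleton_self x)).1
    have hxB : x ∈ stars F := (mem_inter.mp (hxeq ▸ mem_singleton_self x)).2
    set P := stars F \ stars D with hPdef
    have hPcard : P.card = 2 := by
      have hh := card_sdiff_add_card_inter (stars F) (stars D)
      rw [inter_comm (stars F) (stars D)] at hh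
      rw [hPdef]
      omega
    have hPsub : P ⊆ (stars D)ᶜ := by
      intro q hq
      exact mem_compl.2 (mem_sdiff.mp hq).2
    have he1e : e1 (stars D) x ∈ (stars D).erase x := by
      rw [(erase_spec hA hxA).1]; exact mem_insert_self _ _
    have he2e : e2 (stars D) x ∈ (stars D).erase x := by
      rw [(erase_spec hA hxA).1]; exact mem_insert_of_mem (mem_singleton_self _)
    have he12 : e1 (stars D) x ≠ e2 (stars D) x := (erase_spec hA hxA).2.ne
    have hADecomp := A_decomp hA hxA
    -- e1, e2 ∉ B
    have heB : ∀ q ∈ (stars D).erase x, q ∉ stars F := by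
      intro q hq hqB
      have hqx : q ≠ x := (mem_erase.mp hq).1
      have : q ∈ stars D ∩ stars F := mem_inter.mpr ⟨(mem_erase.mp hq).2, hqB⟩
      rw [hxeq, mem_singleton] at this
      exact hqx this
    have hFe1 : F (e1 (stars D) x) ≠ none := fun h => heB _ he1e (mem_stars.2 h)
    have hFe2 : F (e2 (stars D) x) ≠ none := fun h => heB _ he2e (mem_stars.2 h)
    obtain ⟨g1, hg1⟩ := Option.ne_none_iff_exists'.mp hFe1
    obtain ⟨g2, hg2⟩ := Option.ne_none_iff_exists'.mp hFe2
    refine mem_union_right _ (mem_image.2 ⟨(x, P, (g1, g2)), ?_, ?_⟩)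
    · simp only [P1, mem_product, mem_powersetCard]
      exact ⟨hxA, ⟨hPsub, hPcard⟩, mem_univ _⟩
    · funext q
      by_cases h0 : q = x ∨ q ∈ P
      · have hqB : q ∈ stars F := by
          rcases h0 with rfl | h
          · exact hxB
          · exact (mem_sdiff.mp h).1
        simp only [m1, if_pos h0]
        exact (mem_stars.mp hqB).symm
      · push_neg at h0
        simp only [m1, if_neg (by push_neg; exact h0 : ¬(q = x ∨ q ∈ P))]
        rcases eq_or_ne q (e1 (stars D) x) with rfl | h1'
        · simp [hg1.symm]
        rw [if_neg h1']
        rcases eq_or_ne q (e2 (stars D) x) with rfl | h2'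
        · simp [hg2.symm]
        rw [if_neg h2']
        -- q ∉ A and q ∉ B
        have hqA : q ∉ stars D := by
          rw [hADecomp]
          simp only [mem_insert, mem_singleton]
          push_neg
          exact ⟨h0.1, h1', h2'⟩
        have hqB : q ∉ stars F := by
          intro h
          rcases eq_or_ne q x with rfl | hh
          · exact h0.1 rfl
          · exact h0.2 (mem_sdiff.mpr ⟨h, hqA⟩)
        have hDq : D q ≠ none := fun h => hqA (mem_stars.2 h)
        have hFq : F q ≠ none := fun h => hqB (mem_stars.2 h)
        have : q ∉ diffs D F := by rw [hemp]; exact notMem_empty q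
        rw [Qaux.mem_diffs] at this
        push_neg at this
        exact this hDq hFq

end Qaux3

namespace Qaux4
open Finset Qaux Qaux2
variable {n : ℕ} {D : Fin n → Option Bool}

lemma N3_card (hD : faceDim D = 3) : (N3 D).card = n - 3 := by
  rw [N3, card_image_of_injOn, card_compl, Fintype.card_fin,
    show (stars D).card = 3 from hD]
  intro p hp p' hp' hEq
  simp only [coe_compl, Set.mem_compl_iff, mem_coe] at hp hp'
  have hDp : D p ≠ none := fun h => hp (mem_stars.2 h)
  by_contra hne
  have h := congrFun hEq p
  rw [show flipAt D p p = (D p).map (fun b => !b) by simp [flipAt],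
      show flipAt D p' p = D p by simp [flipAt, hne]] at h
  exact map_not_ne hDp h

lemma N2_card (hD : faceDim D = 3) : (N2 D).card = 3 * ((n - 3) * (2 * (n - 3))) := by
  have hA : (stars D).card = 3 := hD
  rw [N2, card_image_of_injOn, P2, card_product, card_product, card_product,
    card_compl, Fintype.card_fin, hA, card_univ, Fintype.card_bool]
  rintro ⟨a, b, v, w⟩ hz ⟨a', b', v', w'⟩ hz' hEq
  have hz2 := Finset.mem_coe.mp hz
  have hz2' := Finset.mem_coe.mp hz'
  simp only [P2, mem_product, mem_compl] at hz2 hz2'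
  obtain ⟨ha, hb, hw⟩ : a ∈ stars D ∧ b ∉ stars D ∧ w ∉ stars D := by tauto
  obtain ⟨ha', hb', hw'⟩ : a' ∈ stars D ∧ b' ∉ stars D ∧ w' ∉ stars D := by tauto
  have hst : insert b ((stars D).erase a) = insert b' ((stars D).erase a') := by
    rw [← stars_m2 ha hb hw (v := v), ← stars_m2 ha' hb' hw' (v := v'), hEq]
  -- b = b'
  have hbb : b = b' := by
    have : b ∈ insert b' ((stars D).erase a') := hst ▸ mem_insert_self b _
    rcases mem_insert.mp this with h | h
    · exact h
    · exact absurd (mem_of_mem_erase h) hb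
  -- a = a'
  have haa : a = a' := by
    by_contra hne
    have h1 : a' ∈ insert b' ((stars D).erase a') := by
      rw [← hst]
      exact mem_insert_of_mem (mem_erase.mpr ⟨Ne.symm hne, ha'⟩)
    rcases mem_insert.mp h1 with h | h
    · exact hb' (h ▸ ha')
    · exact (notMem_erase a' _) h
  subst haa; subst hbb
  have hvv : v = v' := by
    have := congrFun hEq a
    simpa [m2] using this
  subst hvv
  have hww : w = w' := by
    have hDw : D w ≠ none := fun h => hw (mem_stars.2 h)
    have hDw' : D w' ≠ none := fun h => hw' (mem_stars.2 h)
    have hwa : w ≠ a := fun h => hw (h ▸ ha)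
    have hw'a : w' ≠ a := fun h => hw' (h ▸ ha)
    rcases eq_or_ne w b with rfl | hwb
    · by_contra hne
      have hw'b : w' ≠ w := fun h => hne h.symm
      have := congrFun hEq w'
      simp only [m2, if_neg hw'a, if_neg hw'b, if_pos rfl] at this
      exact map_not_ne hDw' this.symm
    · have := congrFun hEq w
      simp only [m2, if_neg hwa, if_neg hwb, if_pos rfl] at this
      by_contra hne
      rw [if_neg hne] at this
      exact map_not_ne hDw this
  subst hww
  rfl

lemma N1_card (hD : faceDim D = 3) : (N1 D).card = 3 * ((n - 3).choose 2 * 4) := by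
  have hA : (stars D).card = 3 := hD
  rw [N1, card_image_of_injOn, P1, card_product, card_product, hA,
    card_powersetCard, card_compl, Fintype.card_fin, card_univ]
  · simp [Fintype.card_prod, hA]
  · rintro ⟨x, P, g⟩ hz ⟨x', P', g'⟩ hz' hEq
    have hz2 := Finset.mem_coe.mp hz
    have hz2' := Finset.mem_coe.mp hz'
    simp only [P1, mem_product, mem_powersetCard] at hz2 hz2'
    obtain ⟨hx, hPsub, hPcard⟩ : x ∈ stars D ∧ P ⊆ (stars D)ᶜ ∧ P.card = 2 := by tauto
    obtain ⟨hx', hPsub', hPcard'⟩ : x' ∈ stars D ∧ P' ⊆ (stars D)ᶜ ∧ P'.card = 2 := by tauto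
    have hst : insert x P = insert x' P' := by
      rw [← stars_m1 hx hPsub hA (g := g), ← stars_m1 hx' hPsub' hA (g := g'), hEq]
    have hxx : x = x' := by
      have h1 : x ∈ insert x' P' := hst ▸ mem_insert_self x _
      rcases mem_insert.mp h1 with h | h
      · exact h
      · exact absurd hx (mem_compl.mp (hPsub' h))
    subst hxx
    have hPP : P = P' := by
      apply Finset.Subset.antisymm
      · intro r hr
        have : r ∈ insert x P' := hst ▸ mem_insert_of_mem hr
        rcases mem_insert.mp this with rfl | h
        · exact absurd hx (mem_compl.mp (hPsub hr))
        · exact h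
      · intro r hr
        have : r ∈ insert x P := hst ▸ mem_insert_of_mem hr
        rcases mem_insert.mp this with rfl | h
        · exact absurd hx (mem_compl.mp (hPsub' hr))
        · exact h
    subst hPP
    have he1e : e1 (stars D) x ∈ (stars D).erase x := by
      rw [(erase_spec hA hx).1]; exact mem_insert_self _ _
    have he2e : e2 (stars D) x ∈ (stars D).erase x := by
      rw [(erase_spec hA hx).1]; exact mem_insert_of_mem (mem_singleton_self _)
    have he12 : e1 (stars D) x ≠ e2 (stars D) x := (erase_spec hA hx).2.ne
    have hcond1 : ¬(e1 (stars D) x = x ∨ e1 (stars D) x ∈ P) := by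
      push_neg
      exact ⟨(mem_erase.mp he1e).1,
        fun h => (mem_compl.mp (hPsub h)) (mem_of_mem_erase he1e)⟩
    have hcond2 : ¬(e2 (stars D) x = x ∨ e2 (stars D) x ∈ P) := by
      push_neg
      exact ⟨(mem_erase.mp he2e).1,
        fun h => (mem_compl.mp (hPsub h)) (mem_of_mem_erase he2e)⟩
    have hg1 := congrFun hEq (e1 (stars D) x)
    simp only [m1, if_neg hcond1, if_pos rfl] at hg1
    have hg2 := congrFun hEq (e2 (stars D) x)
    simp only [m1, if_neg hcond2, if_neg (Ne.symm he12), if_pos rfl] at hg2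
    have : g = g' := Prod.ext (Option.some.inj hg1) (Option.some.inj hg2)
    rw [this]

end Qaux4

namespace Qfinal
open Finset Qaux Qaux2 Qaux3 Qaux4
variable {n : ℕ} {D : Fin n → Option Bool}

lemma U_card (hD : faceDim D = 3) (hn : 5 ≤ n) :
    (N3 D ∪ N2 D ∪ N1 D).card = 12 * (n - 3) * (n - 4) + 7 * (n - 3) := by
  have d32 : Disjoint (N3 D) (N2 D) := by
    rw [disjoint_left]
    intro F h3 h2
    have a3 := (mem_N3_props hD h3).2.2.2
    have a2 := (mem_N2_props hD h2).2.2.2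
    omega
  have d321 : Disjoint (N3 D ∪ N2 D) (N1 D) := by
    rw [disjoint_left]
    intro F h32 h1
    have a1 := (mem_N1_props hD h1).2.2.2
    rcases mem_union.mp h32 with h | h
    · have := (mem_N3_props hD h).2.2.2; omega
    · have := (mem_N2_props hD h).2.2.2; omega
  rw [card_union_of_disjoint d321, card_union_of_disjoint d32,
    N3_card hD, N2_card hD, N1_card hD]
  obtain ⟨k, rfl⟩ := Nat.exists_eq_add_of_le hn
  have h3 : 5 + k - 3 = k + 2 := by omega
  have h4 : 5 + k - 4 = k + 1 := by omega
  rw [h3, h4]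
  have hch : (k + 2).choose 2 * 2 = (k + 2) * (k + 1) := by
    rw [Nat.choose_two_right]
    rw [Nat.div_mul_cancel]
    · norm_num
    · have : Even ((k + 1) * (k + 2)) := Nat.even_mul_succ_self (k + 1)
      have h1 : k + 2 - 1 = k + 1 := rfl
      have h : (k + 2) * (k + 2 - 1) = (k + 1) * (k + 2) := by rw [h1]; ring
      rw [h]
      exact this.two_dvd
  have hch' : ((k + 2).choose 2 : ℤ) * 2 = (k + 2) * (k + 1) := by exact_mod_cast hch
  zify
  linear_combination (6 : ℤ) * hch'

lemma filter_eq (hD : faceDim D = 3) :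
    (univ : Finset (Fin n → Option Bool)).filter
      (fun F => faceDim F = 3 ∧ F ≠ D ∧
        ∃ S : Fin n → Option Bool, faceDim S = 3 ∧ meets 2 D S ∧ meets 2 F S) =
    N3 D ∪ N2 D ∪ N1 D := by
  classical
  ext F
  rw [mem_filter]
  constructor
  · rintro ⟨-, hF, hne, hS⟩
    exact classify hD hF hne (forward hD hS)
  · intro h
    refine ⟨mem_univ F, ?_⟩
    rcases mem_union.mp h with h' | h'
    · rcases mem_union.mp h' with h'' | h''
      · obtain ⟨hF, hne, hc, -⟩ := mem_N3_props hD h''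
        exact ⟨hF, hne, backward hD hF hc⟩
      · obtain ⟨hF, hne, hc, -⟩ := mem_N2_props hD h''
        exact ⟨hF, hne, backward hD hF hc⟩
    · obtain ⟨hF, hne, hc, -⟩ := mem_N1_props hD h'
      exact ⟨hF, hne, backward hD hF hc⟩

end Qfinal

instance {n k p q : ℕ} : DecidableRel (Q n k p q).Adj := fun D F =>
  inferInstanceAs (Decidable (D ≠ F ∧ ∃ S : Fin n → Option Bool,
    faceDim S = p ∧ meets q D.1 S ∧ meets q F.1 S))

open Finset in
/-- For `n ≥ 5`, the graph `Q(n,3,3,2)` is regular of degree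
`12(n-3)(n-4) + 7(n-3)`; and `Q(m,3,3,2)` is complete for all `m ≤ 4`. -/
theorem stmt_12 (n : ℕ) (hn : 5 ≤ n) :
    (∀ D : {D : Fin n → Option Bool // faceDim D = 3},
      Nat.card ((Q n 3 3 2).neighborSet D) = 12 * (n - 3) * (n - 4) + 7 * (n - 3)) ∧
    (∀ m : ℕ, m ≤ 4 → ∀ D F : {D : Fin m → Option Bool // faceDim D = 3},
      D ≠ F → (Q m 3 3 2).Adj D F) := by
  constructor
  · rintro ⟨Draw, hD⟩
    have hset : (Q n 3 3 2).neighborSet ⟨Draw, hD⟩ =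
        ↑((univ : Finset {D : Fin n → Option Bool // faceDim D = 3}).filter
          (fun F => (Q n 3 3 2).Adj ⟨Draw, hD⟩ F)) := by
      ext F; simp [SimpleGraph.neighborSet]
    rw [hset, Nat.card_coe_set_eq, Set.ncard_coe_finset]
    have hbij : (((univ : Finset {D : Fin n → Option Bool // faceDim D = 3})).filter
          (fun F => (Q n 3 3 2).Adj ⟨Draw, hD⟩ F)).card =
        ((univ : Finset (Fin n → Option Bool)).filter
          (fun F => faceDim F = 3 ∧ F ≠ Draw ∧
            ∃ S, faceDim S = 3 ∧ meets 2 Draw S ∧ meets 2 F S)).card := by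
      apply Finset.card_bij (fun F _ => F.1)
      · intro F hF
        rw [Finset.mem_filter] at hF ⊢
        obtain ⟨-, hadj⟩ := hF
        obtain ⟨hne, S, hS, h1, h2⟩ : (⟨Draw, hD⟩ : {D : Fin n → Option Bool // faceDim D = 3}) ≠ F ∧
            ∃ S, faceDim S = 3 ∧ meets 2 Draw S ∧ meets 2 F.1 S := hadj
        exact ⟨mem_univ _, F.2, fun h => hne (Subtype.ext h.symm), S, hS, h1, h2⟩
      · intro F _ F' _ h
        exact Subtype.ext h
      · intro F hF
        rw [Finset.mem_filter] at hF
        obtain ⟨-, hF3, hne, hS⟩ := hF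
        refine ⟨⟨F, hF3⟩, ?_, rfl⟩
        rw [Finset.mem_filter]
        exact ⟨mem_univ _, fun h => hne (congrArg Subtype.val h).symm, hS⟩
    rw [hbij, Qfinal.filter_eq hD, Qfinal.U_card hD hn]
  · rintro m hm ⟨Draw, hD⟩ ⟨Fraw, hF⟩ hne
    have hA : (stars Draw).card = 3 := hD
    have hB : (stars Fraw).card = 3 := hF
    have hu := Finset.card_union_add_card_inter (stars Draw) (stars Fraw)
    have hUle : (stars Draw ∪ stars Fraw).card ≤ m :=
      le_trans (card_le_card (subset_univ _)) (by rw [card_univ, Fintype.card_fin])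
    have htle : (stars Draw ∩ stars Fraw).card ≤ 3 :=
      le_trans (card_le_card inter_subset_left) hA.le
    have ht2 : 2 ≤ (stars Draw ∩ stars Fraw).card := by omega
    have hdsub : Qaux.diffs Draw Fraw ⊆ (stars Draw ∪ stars Fraw)ᶜ := by
      intro p hp
      rw [Qaux.mem_diffs] at hp
      rw [mem_compl, mem_union]
      push_neg
      exact ⟨fun h => hp.1 (Qaux.mem_stars.mp h), fun h => hp.2.1 (Qaux.mem_stars.mp h)⟩
    have hdcard : (Qaux.diffs Draw Fraw).card ≤ 1 := by
      have h1 := card_le_card hdsub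
      rw [card_compl, Fintype.card_fin] at h1
      omega
    have hcrit : Qaux.crit Draw Fraw := Or.inl ⟨ht2, hdcard⟩
    exact ⟨hne, Qaux.backward hD hF hcrit⟩
end

section
/- If F is an independent set in the graph Q(n,k,3,2) (k ≥ 3), then the number of n-gaussoids is at least |G_k|^{|F|}, where |G_k| is the number of k-gaussoids. Concretely, every assignment of a k-gaussoid to each face in F lifts via embeddings to a distinct n-gaussoid. -/
/-- `G` is an `n`-gaussoid: a set of squares of the `n`-cube satisfying the
gaussoid axioms (G1)-(G4). -/
def IsGaussoid (n : ℕ) (G : Finset (Sq n)) : Prop :=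
  (∀ x ∈ G, x.1.card = 2 ∧ Disjoint x.1 x.2) ∧
  ∀ i j k : Fin n, ∀ L : Finset (Fin n),
    i ≠ j → i ≠ k → j ≠ k → i ∉ L → j ∉ L → k ∉ L →
    ((({i,j}, L) ∈ G ∧ ({i,k}, insert j L) ∈ G →
        ({i,k}, L) ∈ G ∧ ({i,j}, insert k L) ∈ G) ∧
     (({i,j}, insert k L) ∈ G ∧ ({i,k}, insert j L) ∈ G →
        ({i,j}, L) ∈ G ∧ ({i,k}, L) ∈ G) ∧
     (({i,j}, L) ∈ G ∧ ({i,k}, L) ∈ G →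
        ({i,j}, insert k L) ∈ G ∧ ({i,k}, insert j L) ∈ G) ∧
     (({i,j}, L) ∈ G ∧ ({i,j}, insert k L) ∈ G →
        ({i,k}, L) ∈ G ∨ ({j,k}, L) ∈ G))

/-- A face of the `n`-cube in set notation: a pair `(I, K)` of disjoint sets,
`I` the star coordinates and `K` the coordinates fixed to `1`.
`faceLe F G` means `F` is contained in `G`. -/
def faceLe {n : ℕ} (F G : Finset (Fin n) × Finset (Fin n)) : Prop :=
  F.1 ⊆ G.1 ∧ G.2 ⊆ F.2 ∧ F.2 ⊆ G.1 ∪ G.2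

/-- Two faces of the `n`-cube share a square (a 2-face contained in both). -/
def sharesSquare {n : ℕ} (D F : Finset (Fin n) × Finset (Fin n)) : Prop :=
  ∃ x : Finset (Fin n) × Finset (Fin n),
    x.1.card = 2 ∧ Disjoint x.1 x.2 ∧ faceLe x D ∧ faceLe x F

/-- Adjacency in `Q(n,k,3,2)`: two (`k`-)faces are adjacent iff some
`3`-face shares a square with both. -/
def adj332 {n : ℕ} (D F : Finset (Fin n) × Finset (Fin n)) : Prop :=
  D ≠ F ∧ ∃ S : Finset (Fin n) × Finset (Fin n),
    S.1.card = 3 ∧ Disjoint S.1 S.2 ∧ sharesSquare D S ∧ sharesSquare F S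

/-- Adjacency in `Q(n,k,2,2)`: two (`k`-)faces are adjacent iff they share
a square. -/
def adj222 {n : ℕ} (D F : Finset (Fin n) × Finset (Fin n)) : Prop :=
  D ≠ F ∧ sharesSquare D F
namespace GaussAux

variable {n k : ℕ}

/-- Embedding of a square of the `k`-cube into the `n`-cube along `e`, fixing `K`. -/
def embSq (e : Fin k ↪ Fin n) (K : Finset (Fin n)) (x : Sq k) : Sq n :=
  (x.1.map e, x.2.map e ∪ K)

variable {e : Fin k ↪ Fin n} {K : Finset (Fin n)}

lemma disj_map (hK : ∀ a, e a ∉ K) (s : Finset (Fin k)) : Disjoint (s.map e) K := by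
  rw [Finset.disjoint_left]
  rintro x hx hxK
  obtain ⟨a, -, rfl⟩ := Finset.mem_map.mp hx
  exact hK a hxK

lemma snd_inj (hK : ∀ a, e a ∉ K) {M M' : Finset (Fin k)}
    (h : M.map e ∪ K = M'.map e ∪ K) : M = M' := by
  apply Finset.map_injective e
  have h2 := congrArg (fun s => s \ K) h
  simpa [Finset.union_sdiff_cancel_right (disj_map hK M),
    Finset.union_sdiff_cancel_right (disj_map hK M')] using h2

lemma embSq_inj (hK : ∀ a, e a ∉ K) : Function.Injective (embSq e K) := fun x y h =>
  Prod.ext (Finset.map_injective e (congrArg Prod.fst h)) (snd_inj hK (congrArg Prod.snd h))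

lemma pair_map (a b : Fin k) : ({a, b} : Finset (Fin k)).map e = {e a, e b} := by
  simp [Finset.map_insert]

lemma snd_insert (a : Fin k) (M : Finset (Fin k)) :
    (insert a M).map e ∪ K = insert (e a) (M.map e ∪ K) := by
  rw [Finset.map_insert, Finset.insert_union]

/-- Elimination: extract a preimage square from a membership in the embedded gaussoid. -/
lemma mem_elim {A : Finset (Sq k)} (hA1 : ∀ x ∈ A, x.1.card = 2 ∧ Disjoint x.1 x.2)
    {u v : Fin n} {W : Finset (Fin n)}
    (h : ({u, v}, W) ∈ A.image (embSq e K)) (huv : u ≠ v) :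
    ∃ a b M, e a = u ∧ e b = v ∧ W = M.map e ∪ K ∧ ({a, b}, M) ∈ A := by
  obtain ⟨x, hxA, hx⟩ := Finset.mem_image.mp h
  have h1 : x.1.map e = {u, v} := congrArg Prod.fst hx
  have h2 : x.2.map e ∪ K = W := congrArg Prod.snd hx
  have hu : u ∈ x.1.map e := by rw [h1]; simp
  have hv : v ∈ x.1.map e := by rw [h1]; simp
  obtain ⟨a, ha, rfl⟩ := Finset.mem_map.mp hu
  obtain ⟨b, hb, rfl⟩ := Finset.mem_map.mp hv
  have hab : a ≠ b := fun hh => huv (by rw [hh])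
  have hcard := (hA1 x hxA).1
  have hsub : ({a, b} : Finset (Fin k)) ⊆ x.1 := by
    intro z hz
    rcases Finset.mem_insert.mp hz with rfl | hz
    · exact ha
    · exact Finset.mem_singleton.mp hz ▸ hb
  have hx1 : x.1 = {a, b} := by
    refine (Finset.eq_of_subset_of_card_le hsub ?_).symm
    rw [hcard, Finset.card_insert_of_notMem (by simp [hab]), Finset.card_singleton]
  refine ⟨a, b, x.2, rfl, rfl, h2.symm, ?_⟩
  rw [← hx1]
  exact hxA

/-- Introduction. -/
lemma mem_intro {A : Finset (Sq k)} {a b : Fin k} {M : Finset (Fin k)}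
    (h : ({a, b}, M) ∈ A) :
    ({e a, e b}, M.map e ∪ K) ∈ A.image (embSq e K) := by
  refine Finset.mem_image.mpr ⟨({a, b}, M), h, ?_⟩
  simp [embSq, pair_map]

/-- The embedding of a gaussoid into a face is a gaussoid. -/
theorem isGaussoid_image (hK : ∀ a, e a ∉ K) {A : Finset (Sq k)}
    (hA : IsGaussoid k A) : IsGaussoid n (A.image (embSq e K)) := by
  constructor
  · rintro y hy
    obtain ⟨x, hxA, rfl⟩ := Finset.mem_image.mp hy
    obtain ⟨hc, hd⟩ := hA.1 x hxA
    refine ⟨by simpa [embSq] using hc, ?_⟩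
    simp only [embSq]
    rw [Finset.disjoint_union_right]
    refine ⟨?_, disj_map hK _⟩
    rw [Finset.disjoint_left]
    rintro z hz hz'
    obtain ⟨a, ha, rfl⟩ := Finset.mem_map.mp hz
    obtain ⟨b, hb, hba⟩ := Finset.mem_map.mp hz'
    cases e.injective hba
    exact (Finset.disjoint_left.mp hd) ha hb
  intro i j c L hij hic hjc hiL hjL hcL
  refine ⟨?_, ?_, ?_, ?_⟩
  · -- (G1') semigraphoid
    rintro ⟨h1, h2⟩
    obtain ⟨i₀, j₀, L₀, rfl, rfl, rfl, hx1⟩ := mem_elim hA.1 h1 hij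
    obtain ⟨i₁, c₀, M, hei, rfl, hW, hx2⟩ := mem_elim hA.1 h2 hic
    obtain rfl := e.injective hei
    have hM : M = insert j₀ L₀ :=
      snd_inj hK (hW.symm.trans (snd_insert j₀ L₀).symm)
    subst hM
    have hax := (hA.2 i₁ j₀ c₀ L₀ (fun h => hij (congrArg e h))
      (fun h => hic (congrArg e h)) (fun h => hjc (congrArg e h))
      (fun h => hiL (Finset.mem_union_left _ (Finset.mem_map_of_mem e h)))
      (fun h => hjL (Finset.mem_union_left _ (Finset.mem_map_of_mem e h)))
      (fun h => hcL (Finset.mem_union_left _ (Finset.mem_map_of_mem e h)))).1 ⟨hx1, hx2⟩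
    refine ⟨mem_intro hax.1, ?_⟩
    rw [← snd_insert]
    exact mem_intro hax.2
  · -- (G2')
    rintro ⟨h1, h2⟩
    obtain ⟨i₀, j₀, M, rfl, rfl, hW1, hx1⟩ := mem_elim hA.1 h1 hij
    obtain ⟨i₁, c₀, M', hei, rfl, hW2, hx2⟩ := mem_elim hA.1 h2 hic
    obtain rfl := e.injective hei
    have hcK : e c₀ ∉ K := hK c₀
    have hKL : K ⊆ L := by
      intro x hx
      have hx' : x ∈ insert (e c₀) L := hW1 ▸ Finset.mem_union_right _ hx
      rcases Finset.mem_insert.mp hx' with rfl | hx'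
      · exact absurd hx hcK
      · exact hx'
    have hcM : e c₀ ∈ M.map e := by
      have : e c₀ ∈ M.map e ∪ K := hW1 ▸ Finset.mem_insert_self _ _
      rcases Finset.mem_union.mp this with h | h
      · exact h
      · exact absurd h hcK
    obtain ⟨c₁, hc₁M, hc₁⟩ := Finset.mem_map.mp hcM
    obtain rfl := e.injective hc₁
    set L₀ := M.erase c₁ with hL₀
    have hMi : M = insert c₁ L₀ := (Finset.insert_erase hc₁M).symm
    have hLe : L = L₀.map e ∪ K := by
      have hMe : M.map e = insert (e c₁) L \ K := by
        have := congrArg (fun s => s \ K) hW1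
        simpa [Finset.union_sdiff_cancel_right (disj_map hK M)] using this.symm
      have h1 : L₀.map e = L \ K := by
        rw [hL₀, Finset.map_erase, hMe, Finset.insert_sdiff_of_notMem _ hcK,
          Finset.erase_insert (by simp [Finset.mem_sdiff]; intro h; exact absurd h hcL)]
      rw [h1, Finset.sdiff_union_of_subset hKL]
    have hM'e : M' = insert j₀ L₀ := by
      apply snd_inj hK
      rw [← hW2, snd_insert, ← hLe]
    have hMe2 : M = insert c₁ L₀ := hMi
    rw [hMe2] at hx1
    rw [hM'e] at hx2
    have hij' : i₁ ≠ j₀ := fun h => hij (congrArg e h)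
    have hic' : i₁ ≠ c₁ := fun h => hic (congrArg e h)
    have hjc' : j₀ ≠ c₁ := fun h => hjc (congrArg e h)
    have hiL' : i₁ ∉ L₀ := fun h => hiL (hLe ▸ Finset.mem_union_left _ (Finset.mem_map_of_mem e h))
    have hjL' : j₀ ∉ L₀ := fun h => hjL (hLe ▸ Finset.mem_union_left _ (Finset.mem_map_of_mem e h))
    have hcL' : c₁ ∉ L₀ := fun h => hcL (hLe ▸ Finset.mem_union_left _ (Finset.mem_map_of_mem e h))
    have hax := (hA.2 i₁ j₀ c₁ L₀ hij' hic' hjc' hiL' hjL' hcL').2.1 ⟨hx1, hx2⟩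
    rw [hLe]
    exact ⟨mem_intro hax.1, mem_intro hax.2⟩
  · -- (G3')
    rintro ⟨h1, h2⟩
    obtain ⟨i₀, j₀, L₀, rfl, rfl, rfl, hx1⟩ := mem_elim hA.1 h1 hij
    obtain ⟨i₁, c₀, M', hei, rfl, hW, hx2⟩ := mem_elim hA.1 h2 hic
    obtain rfl := e.injective hei
    have hM : L₀ = M' := snd_inj hK hW
    subst hM
    have hax := (hA.2 i₁ j₀ c₀ L₀ (fun h => hij (congrArg e h))
      (fun h => hic (congrArg e h)) (fun h => hjc (congrArg e h))
      (fun h => hiL (Finset.mem_union_left _ (Finset.mem_map_of_mem e h)))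
      (fun h => hjL (Finset.mem_union_left _ (Finset.mem_map_of_mem e h)))
      (fun h => hcL (Finset.mem_union_left _ (Finset.mem_map_of_mem e h)))).2.2.1 ⟨hx1, hx2⟩
    constructor
    · rw [← snd_insert]; exact mem_intro hax.1
    · rw [← snd_insert]; exact mem_intro hax.2
  · -- (G4') weak transitivity
    rintro ⟨h1, h2⟩
    obtain ⟨i₀, j₀, L₀, rfl, rfl, rfl, hx1⟩ := mem_elim hA.1 h1 hij
    obtain ⟨i₁, j₁, M', hei, hej, hW, hx2⟩ := mem_elim hA.1 h2 hij
    obtain rfl := e.injective hei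
    obtain rfl := e.injective hej
    have hcK : c ∉ K := fun h => hcL (Finset.mem_union_right _ h)
    have hcM : c ∈ M'.map e := by
      have : c ∈ M'.map e ∪ K := hW ▸ Finset.mem_insert_self _ _
      rcases Finset.mem_union.mp this with h | h
      · exact h
      · exact absurd h hcK
    obtain ⟨c₀, hc₀M, rfl⟩ := Finset.mem_map.mp hcM
    have hM' : M' = insert c₀ L₀ := by
      apply snd_inj hK
      rw [← hW, snd_insert]
    rw [hM'] at hx2
    have hax := (hA.2 i₁ j₁ c₀ L₀ (fun h => hij (congrArg e h))
      (fun h => hic (congrArg e h)) (fun h => hjc (congrArg e h))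
      (fun h => hiL (Finset.mem_union_left _ (Finset.mem_map_of_mem e h)))
      (fun h => hjL (Finset.mem_union_left _ (Finset.mem_map_of_mem e h)))
      (fun h => hcL (Finset.mem_union_left _ (Finset.mem_map_of_mem e h)))).2.2.2 ⟨hx1, hx2⟩
    rcases hax with h | h
    · exact Or.inl (mem_intro h)
    · exact Or.inr (mem_intro h)

end GaussAux
namespace GaussAux

variable {n k : ℕ}

/-- Two faces of `𝓕` whose squares lie in a common 3-face are equal. -/
lemma faces_eq_of_3face {𝓕 : Finset (Finset (Fin n) × Finset (Fin n))}
    (hindep : ∀ D ∈ 𝓕, ∀ F ∈ 𝓕, ¬ adj332 D F)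
    {D D' : Finset (Fin n) × Finset (Fin n)} (hD : D ∈ 𝓕) (hD' : D' ∈ 𝓕)
    {S y y' : Finset (Fin n) × Finset (Fin n)}
    (hS1 : S.1.card = 3) (hS2 : Disjoint S.1 S.2)
    (hy : y.1.card = 2) (hyd : Disjoint y.1 y.2) (hyD : faceLe y D) (hyS : faceLe y S)
    (hy' : y'.1.card = 2) (hyd' : Disjoint y'.1 y'.2) (hyD' : faceLe y' D')
    (hyS' : faceLe y' S) : D = D' := by
  by_contra hne
  exact hindep D hD D' hD'
    ⟨hne, S, hS1, hS2, ⟨y, hy, hyd, hyD, hyS⟩, ⟨y', hy', hyd', hyD', hyS'⟩⟩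

/-- Two faces of `𝓕` sharing a square are equal (using `k ≥ 3`). -/
lemma faces_eq_of_sq (hk : 3 ≤ k) {𝓕 : Finset (Finset (Fin n) × Finset (Fin n))}
    (hfaces : ∀ D ∈ 𝓕, D.1.card = k ∧ Disjoint D.1 D.2)
    (hindep : ∀ D ∈ 𝓕, ∀ F ∈ 𝓕, ¬ adj332 D F)
    {D D' : Finset (Fin n) × Finset (Fin n)} (hD : D ∈ 𝓕) (hD' : D' ∈ 𝓕)
    {y : Finset (Fin n) × Finset (Fin n)}
    (hy : y.1.card = 2) (hyd : Disjoint y.1 y.2)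
    (h1 : faceLe y D) (h2 : faceLe y D') : D = D' := by
  have hDk := (hfaces D hD).1
  have hss : y.1 ⊂ D.1 := by
    refine ⟨h1.1, fun hsub => ?_⟩
    have h3 := Finset.card_le_card hsub
    rw [hy, hDk] at h3
    omega
  obtain ⟨m, hmD, hmy⟩ := Finset.exists_of_ssubset hss
  have hfS : faceLe y (insert m y.1, y.2.erase m) := by
    refine ⟨Finset.subset_insert _ _, Finset.erase_subset _ _, ?_⟩
    intro x hx
    by_cases hxm : x = m
    · subst hxm; exact Finset.mem_union_left _ (Finset.mem_insert_self _ _)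
    · exact Finset.mem_union_right _ (Finset.mem_erase.mpr ⟨hxm, hx⟩)
  refine faces_eq_of_3face hindep hD hD'
    (S := (insert m y.1, y.2.erase m)) ?_ ?_ hy hyd h1 hfS hy hyd h2 hfS
  · show (insert m y.1).card = 3
    rw [Finset.card_insert_of_notMem hmy, hy]
  · show Disjoint (insert m y.1) (y.2.erase m)
    rw [Finset.disjoint_left]
    intro x hx hx'
    rcases Finset.mem_insert.mp hx with rfl | hx
    · exact (Finset.mem_erase.mp hx').1 rfl
    · exact Finset.disjoint_left.mp hyd hx (Finset.mem_erase.mp hx').2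

variable {𝓕 : Finset (Finset (Fin n) × Finset (Fin n))}

/-- The union of the embedded gaussoids. -/
def Phi (E : {D // D ∈ 𝓕} → (Fin k ↪ Fin n))
    (φ : {D // D ∈ 𝓕} → Finset (Sq k)) : Finset (Sq n) :=
  𝓕.attach.sup fun D => (φ D).image (embSq (E D) D.1.2)

lemma hKe (E : {D // D ∈ 𝓕} → (Fin k ↪ Fin n))
    (hE : ∀ D a, E D a ∈ D.1.1)
    (hfaces : ∀ D ∈ 𝓕, D.1.card = k ∧ Disjoint D.1 D.2)
    (D : {D // D ∈ 𝓕}) : ∀ a, E D a ∉ D.1.2 := fun a h =>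
  Finset.disjoint_left.mp (hfaces D.1 D.2).2 (hE D a) h

lemma face_of_mem (E : {D // D ∈ 𝓕} → (Fin k ↪ Fin n))
    (hE : ∀ D a, E D a ∈ D.1.1)
    (D : {D // D ∈ 𝓕}) (A : Finset (Sq k)) {y : Sq n}
    (hy : y ∈ A.image (embSq (E D) D.1.2)) : faceLe y D.1 := by
  obtain ⟨x, -, rfl⟩ := Finset.mem_image.mp hy
  refine ⟨?_, Finset.subset_union_right, ?_⟩
  · intro z hz
    obtain ⟨a, -, rfl⟩ := Finset.mem_map.mp hz
    exact hE D a
  · intro z hz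
    rcases Finset.mem_union.mp hz with hz | hz
    · obtain ⟨a, -, rfl⟩ := Finset.mem_map.mp hz
      exact Finset.mem_union_left _ (hE D a)
    · exact Finset.mem_union_right _ hz

lemma mem_Phi_of (E : {D // D ∈ 𝓕} → (Fin k ↪ Fin n))
    (φ : {D // D ∈ 𝓕} → Finset (Sq k)) (D : {D // D ∈ 𝓕}) {y : Sq n}
    (hy : y ∈ (φ D).image (embSq (E D) D.1.2)) : y ∈ Phi E φ :=
  Finset.mem_sup.mpr ⟨D, Finset.mem_attach _ _, hy⟩

theorem Phi_gaussoid (E : {D // D ∈ 𝓕} → (Fin k ↪ Fin n))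
    (hE : ∀ D a, E D a ∈ D.1.1)
    (hfaces : ∀ D ∈ 𝓕, D.1.card = k ∧ Disjoint D.1 D.2)
    (hindep : ∀ D ∈ 𝓕, ∀ F ∈ 𝓕, ¬ adj332 D F)
    (φ : {D // D ∈ 𝓕} → Finset (Sq k)) (hφ : ∀ D, IsGaussoid k (φ D)) :
    IsGaussoid n (Phi E φ) := by
  constructor
  · intro y hy
    obtain ⟨D, -, hyD⟩ := Finset.mem_sup.mp hy
    exact (isGaussoid_image (hKe E hE hfaces D) (hφ D)).1 y hyD
  intro i j c L hij hic hjc hiL hjL hcL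
  have hS1 : ({i, j, c} : Finset (Fin n)).card = 3 := by
    rw [Finset.card_insert_of_notMem (by simp [hij, hic]),
      Finset.card_insert_of_notMem (by simp [hjc]), Finset.card_singleton]
  have hS2 : Disjoint ({i, j, c} : Finset (Fin n)) L := by
    rw [Finset.disjoint_left]
    intro x hx hxL
    simp only [Finset.mem_insert, Finset.mem_singleton] at hx
    rcases hx with rfl | rfl | rfl
    · exact hiL hxL
    · exact hjL hxL
    · exact hcL hxL
  have hface : ∀ (a b : Fin n) (W : Finset (Fin n)), a ∈ ({i, j, c} : Finset (Fin n)) →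
      b ∈ ({i, j, c} : Finset (Fin n)) → L ⊆ W → W ⊆ ({i, j, c} : Finset (Fin n)) ∪ L →
      faceLe (({a, b}, W) : Finset (Fin n) × Finset (Fin n)) ({i, j, c}, L) := by
    intro a b W ha hb h1 h2
    refine ⟨?_, h1, h2⟩
    intro z hz
    rcases Finset.mem_insert.mp hz with rfl | hz
    · exact ha
    · exact (Finset.mem_singleton.mp hz) ▸ hb
  have hsubj : insert j L ⊆ ({i, j, c} : Finset (Fin n)) ∪ L := by
    intro x hx; simp only [Finset.mem_insert, Finset.mem_union, Finset.mem_singleton] at hx ⊢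
    tauto
  have hsubc : insert c L ⊆ ({i, j, c} : Finset (Fin n)) ∪ L := by
    intro x hx; simp only [Finset.mem_insert, Finset.mem_union, Finset.mem_singleton] at hx ⊢
    tauto
  have hLL : L ⊆ ({i, j, c} : Finset (Fin n)) ∪ L := Finset.subset_union_right
  have combine : ∀ y₁ y₂ : Sq n, y₁ ∈ Phi E φ → y₂ ∈ Phi E φ →
      faceLe y₁ ({i, j, c}, L) → faceLe y₂ ({i, j, c}, L) →
      ∃ D : {D // D ∈ 𝓕}, y₁ ∈ (φ D).image (embSq (E D) D.1.2) ∧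
        y₂ ∈ (φ D).image (embSq (E D) D.1.2) := by
    intro y₁ y₂ h1 h2 hf1 hf2
    obtain ⟨D₁, -, hb1⟩ := Finset.mem_sup.mp h1
    obtain ⟨D₂, -, hb2⟩ := Finset.mem_sup.mp h2
    have hy₁ := (isGaussoid_image (hKe E hE hfaces D₁) (hφ D₁)).1 y₁ hb1
    have hy₂ := (isGaussoid_image (hKe E hE hfaces D₂) (hφ D₂)).1 y₂ hb2
    have hDeq : D₁.1 = D₂.1 := faces_eq_of_3face hindep D₁.2 D₂.2
      (S := ({i, j, c}, L)) hS1 hS2 hy₁.1 hy₁.2 (face_of_mem E hE D₁ _ hb1) hf1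
      hy₂.1 hy₂.2 (face_of_mem E hE D₂ _ hb2) hf2
    have hD : D₁ = D₂ := Subtype.ext hDeq
    subst hD
    exact ⟨D₁, hb1, hb2⟩
  refine ⟨?_, ?_, ?_, ?_⟩
  · rintro ⟨h1, h2⟩
    obtain ⟨D, hb1, hb2⟩ := combine _ _ h1 h2
      (hface i j L (by simp) (by simp) subset_rfl hLL)
      (hface i c (insert j L) (by simp) (by simp) (Finset.subset_insert _ _) hsubj)
    have hax := ((isGaussoid_image (hKe E hE hfaces D) (hφ D)).2 i j c L
      hij hic hjc hiL hjL hcL).1 ⟨hb1, hb2⟩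
    exact ⟨mem_Phi_of E φ D hax.1, mem_Phi_of E φ D hax.2⟩
  · rintro ⟨h1, h2⟩
    obtain ⟨D, hb1, hb2⟩ := combine _ _ h1 h2
      (hface i j (insert c L) (by simp) (by simp) (Finset.subset_insert _ _) hsubc)
      (hface i c (insert j L) (by simp) (by simp) (Finset.subset_insert _ _) hsubj)
    have hax := ((isGaussoid_image (hKe E hE hfaces D) (hφ D)).2 i j c L
      hij hic hjc hiL hjL hcL).2.1 ⟨hb1, hb2⟩
    exact ⟨mem_Phi_of E φ D hax.1, mem_Phi_of E φ D hax.2⟩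
  · rintro ⟨h1, h2⟩
    obtain ⟨D, hb1, hb2⟩ := combine _ _ h1 h2
      (hface i j L (by simp) (by simp) subset_rfl hLL)
      (hface i c L (by simp) (by simp) subset_rfl hLL)
    have hax := ((isGaussoid_image (hKe E hE hfaces D) (hφ D)).2 i j c L
      hij hic hjc hiL hjL hcL).2.2.1 ⟨hb1, hb2⟩
    exact ⟨mem_Phi_of E φ D hax.1, mem_Phi_of E φ D hax.2⟩
  · rintro ⟨h1, h2⟩
    obtain ⟨D, hb1, hb2⟩ := combine _ _ h1 h2
      (hface i j L (by simp) (by simp) subset_rfl hLL)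
      (hface i j (insert c L) (by simp) (by simp) (Finset.subset_insert _ _) hsubc)
    have hax := ((isGaussoid_image (hKe E hE hfaces D) (hφ D)).2 i j c L
      hij hic hjc hiL hjL hcL).2.2.2 ⟨hb1, hb2⟩
    rcases hax with h | h
    · exact Or.inl (mem_Phi_of E φ D h)
    · exact Or.inr (mem_Phi_of E φ D h)

lemma Phi_mono (hk : 3 ≤ k) (E : {D // D ∈ 𝓕} → (Fin k ↪ Fin n))
    (hE : ∀ D a, E D a ∈ D.1.1)
    (hfaces : ∀ D ∈ 𝓕, D.1.card = k ∧ Disjoint D.1 D.2)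
    (hindep : ∀ D ∈ 𝓕, ∀ F ∈ 𝓕, ¬ adj332 D F)
    (φ φ' : {D // D ∈ 𝓕} → Finset (Sq k))
    (hφ : ∀ D, IsGaussoid k (φ D))
    (h : Phi E φ ⊆ Phi E φ') (D : {D // D ∈ 𝓕}) : φ D ⊆ φ' D := by
  intro x hx
  have hmem : embSq (E D) D.1.2 x ∈ Phi E φ :=
    mem_Phi_of E φ D (Finset.mem_image_of_mem _ hx)
  have hmem' := h hmem
  obtain ⟨D', -, hb⟩ := Finset.mem_sup.mp hmem'
  have hy := (isGaussoid_image (hKe E hE hfaces D) (hφ D)).1 _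
    (Finset.mem_image_of_mem (embSq (E D) D.1.2) hx)
  have hDeq : D.1 = D'.1 := faces_eq_of_sq hk hfaces hindep D.2 D'.2 hy.1 hy.2
    (face_of_mem E hE D _ (Finset.mem_image_of_mem (embSq (E D) D.1.2) hx))
    (face_of_mem E hE D' _ hb)
  have hD : D = D' := Subtype.ext hDeq
  subst hD
  obtain ⟨x', hx', heq⟩ := Finset.mem_image.mp hb
  obtain rfl := embSq_inj (hKe E hE hfaces D) heq
  exact hx'

end GaussAux

/-- If `𝓕` is an independent set of `k`-faces in `Q(n,k,3,2)` with `k ≥ 3`,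
then the number of `n`-gaussoids is at least `|𝔊_k| ^ |𝓕|`. -/
theorem stmt_13 (n k : ℕ) (hk : 3 ≤ k) (hkn : k ≤ n)
    (𝓕 : Finset (Finset (Fin n) × Finset (Fin n)))
    (hfaces : ∀ D ∈ 𝓕, D.1.card = k ∧ Disjoint D.1 D.2)
    (hindep : ∀ D ∈ 𝓕, ∀ F ∈ 𝓕, ¬ adj332 D F) :
    Nat.card {A : Finset (Sq k) // IsGaussoid k A} ^ 𝓕.card ≤
      Nat.card {G : Finset (Sq n) // IsGaussoid n G} := by
  classical
  set E : {D // D ∈ 𝓕} → (Fin k ↪ Fin n) :=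
    fun D => (D.1.1.orderEmbOfFin (hfaces D.1 D.2).1).toEmbedding with hEdef
  have hE : ∀ D a, E D a ∈ D.1.1 := fun D a => Finset.orderEmbOfFin_mem _ _ _
  set Φ : ({D // D ∈ 𝓕} → {A : Finset (Sq k) // IsGaussoid k A}) →
      {G : Finset (Sq n) // IsGaussoid n G} :=
    fun φ => ⟨GaussAux.Phi E (fun D => (φ D).1),
      GaussAux.Phi_gaussoid E hE hfaces hindep _ (fun D => (φ D).2)⟩ with hΦ
  have hinj : Function.Injective Φ := by
    intro φ φ' h
    have h2 : GaussAux.Phi E (fun D => (φ D).1) = GaussAux.Phi E (fun D => (φ' D).1) :=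
      congrArg Subtype.val h
    funext D
    apply Subtype.ext
    apply Finset.Subset.antisymm
    · exact GaussAux.Phi_mono hk E hE hfaces hindep _ _ (fun D => (φ D).2)
        (le_of_eq h2) D
    · exact GaussAux.Phi_mono hk E hE hfaces hindep _ _ (fun D => (φ' D).2)
        (le_of_eq h2.symm) D
  calc Nat.card {A : Finset (Sq k) // IsGaussoid k A} ^ 𝓕.card
      = Nat.card ({D // D ∈ 𝓕} → {A : Finset (Sq k) // IsGaussoid k A}) := by
        rw [Nat.card_fun, Nat.card_eq_finsetCard]
    _ ≤ Nat.card {G : Finset (Sq n) // IsGaussoid n G} :=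
        Nat.card_le_card_of_injective Φ hinj
end

section
/- Let F be an independent set in Q(n,k,2,2) and suppose there exist c injections f_1,…,f_c from the set of k-gaussoids into the non-k-gaussoid subsets of A_k with pairwise disjoint ranges. Then 2^{|A_n|} / |G_n| ≥ c^{|F|}, i.e., the number of n-gaussoids is at most 2^{|A_n|} / c^{|F|}. -/
namespace Stmt14Aux
open Finset

variable {n k : ℕ}

/-- the increasing enumeration of the star coordinates of a face -/
def em (D : Finset (Fin n) × Finset (Fin n)) (h : D.1.card = k) : Fin k → Fin n :=
  D.1.orderEmbOfFin h

lemma em_inj (D : Finset (Fin n) × Finset (Fin n)) (h : D.1.card = k) :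
    Function.Injective (em D h) := (D.1.orderEmbOfFin h).injective

lemma em_mem (D : Finset (Fin n) × Finset (Fin n)) (h : D.1.card = k) (a : Fin k) :
    em D h a ∈ D.1 := Finset.orderEmbOfFin_mem D.1 h a

lemma image_em_univ (D : Finset (Fin n) × Finset (Fin n)) (h : D.1.card = k) :
    (univ : Finset (Fin k)).image (em D h) = D.1 := by
  ext a
  simp only [mem_image, mem_univ, true_and]
  constructor
  · rintro ⟨b, rfl⟩; exact em_mem D h b
  · intro ha
    have : a ∈ Set.range (D.1.orderEmbOfFin h) := by
      rw [Finset.range_orderEmbOfFin]; exact ha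
    obtain ⟨b, hb⟩ := this; exact ⟨b, hb⟩

/-- embedding of squares of the k-cube into a k-face of the n-cube -/
def emb (D : Finset (Fin n) × Finset (Fin n)) (h : D.1.card = k) (y : Sq k) : Sq n :=
  (y.1.image (em D h), y.2.image (em D h) ∪ D.2)

lemma emb_fst (D : Finset (Fin n) × Finset (Fin n)) (h : D.1.card = k) (y : Sq k) :
    (emb D h y).1 = y.1.image (em D h) := rfl

lemma image_subset_D1 (D : Finset (Fin n) × Finset (Fin n)) (h : D.1.card = k)
    (s : Finset (Fin k)) : s.image (em D h) ⊆ D.1 := by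
  intro a ha; obtain ⟨b, _, rfl⟩ := mem_image.1 ha; exact em_mem D h b

lemma emb_inj (D : Finset (Fin n) × Finset (Fin n)) (h : D.1.card = k)
    (hd : Disjoint D.1 D.2) : Function.Injective (emb D h) := by
  intro y y' hy
  have h1 : y.1.image (em D h) = y'.1.image (em D h) := congrArg Prod.fst hy
  have h2 : y.2.image (em D h) ∪ D.2 = y'.2.image (em D h) ∪ D.2 := congrArg Prod.snd hy
  have hdis : ∀ s : Finset (Fin k), Disjoint (s.image (em D h)) D.2 := fun s =>
    Finset.disjoint_of_subset_left (image_subset_D1 D h s) hd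
  have h2' : y.2.image (em D h) = y'.2.image (em D h) := by
    have e1 : (y.2.image (em D h) ∪ D.2) \ D.2 = y.2.image (em D h) := by
      rw [union_sdiff_distrib, sdiff_self]; simp [sdiff_eq_self_of_disjoint (hdis y.2)]
    have e2 : (y'.2.image (em D h) ∪ D.2) \ D.2 = y'.2.image (em D h) := by
      rw [union_sdiff_distrib, sdiff_self]; simp [sdiff_eq_self_of_disjoint (hdis y'.2)]
    rw [← e1, ← e2, h2]
  have := Finset.image_injective (em_inj D h)
  exact Prod.ext (this h1) (this h2')

lemma emb_faceLe (D : Finset (Fin n) × Finset (Fin n)) (h : D.1.card = k) (y : Sq k) :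
    faceLe (emb D h y) D := by
  refine ⟨image_subset_D1 D h y.1, subset_union_right, ?_⟩
  exact union_subset_union_left (image_subset_D1 D h y.2)

lemma emb_valid (D : Finset (Fin n) × Finset (Fin n)) (h : D.1.card = k)
    (hd : Disjoint D.1 D.2) {y : Sq k} (hy : y.1.card = 2 ∧ Disjoint y.1 y.2) :
    (emb D h y).1.card = 2 ∧ Disjoint (emb D h y).1 (emb D h y).2 := by
  constructor
  · rw [emb_fst, Finset.card_image_of_injective _ (em_inj D h), hy.1]
  · refine Finset.disjoint_union_right.2 ⟨?_, ?_⟩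
    · exact (Finset.disjoint_image (em_inj D h)).2 hy.2
    · exact Finset.disjoint_of_subset_left (image_subset_D1 D h y.1) hd

lemma valid_of_emb (D : Finset (Fin n) × Finset (Fin n)) (h : D.1.card = k)
    {y : Sq k} (hy : (emb D h y).1.card = 2 ∧ Disjoint (emb D h y).1 (emb D h y).2) :
    y.1.card = 2 ∧ Disjoint y.1 y.2 := by
  constructor
  · rw [← hy.1, emb_fst, Finset.card_image_of_injective _ (em_inj D h)]
  · have := Finset.disjoint_union_right.1 hy.2
    exact (Finset.disjoint_image (em_inj D h)).1 this.1

lemma emb_surj (D : Finset (Fin n) × Finset (Fin n)) (h : D.1.card = k)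
    {x : Sq n} (hx : faceLe x D) : ∃ y : Sq k, emb D h y = x := by
  obtain ⟨hx1, hx2, hx3⟩ := hx
  have hq : x.1 ⊆ (univ : Finset (Fin k)).image (em D h) := by
    rw [image_em_univ]; exact hx1
  have hM : x.2 \ D.2 ⊆ (univ : Finset (Fin k)).image (em D h) := by
    rw [image_em_univ]
    intro a ha
    have := mem_sdiff.1 ha
    rcases mem_union.1 (hx3 this.1) with h' | h'
    · exact h'
    · exact absurd h' this.2
  obtain ⟨p, -, hp⟩ := Finset.subset_image_iff.1 hq
  obtain ⟨L, -, hL⟩ := Finset.subset_image_iff.1 hM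
  refine ⟨(p, L), ?_⟩
  simp only [emb, hp, hL]
  exact Prod.ext rfl (Finset.sdiff_union_of_subset hx2)

/-- the minor of G on the face D -/
def minor (D : Finset (Fin n) × Finset (Fin n)) (h : D.1.card = k) (G : Finset (Sq n)) :
    Finset (Sq k) :=
  univ.filter (fun y => emb D h y ∈ G)

lemma mem_minor (D : Finset (Fin n) × Finset (Fin n)) (h : D.1.card = k) (G : Finset (Sq n))
    (y : Sq k) : y ∈ minor D h G ↔ emb D h y ∈ G := by
  simp [minor]

lemma minor_gaussoid (D : Finset (Fin n) × Finset (Fin n)) (h : D.1.card = k)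
    (hd : Disjoint D.1 D.2) {G : Finset (Sq n)} (hG : IsGaussoid n G) :
    IsGaussoid k (minor D h G) := by
  constructor
  · intro y hy
    exact valid_of_emb D h (hG.1 _ ((mem_minor D h G y).1 hy))
  · intro i j l L hij hil hjl hiL hjL hlL
    have key : ∀ a b (M : Finset (Fin k)),
        (({a, b}, M) ∈ minor D h G) ↔
          (({em D h a, em D h b}, M.image (em D h) ∪ D.2) ∈ G) := by
      intro a b M
      rw [mem_minor]
      simp only [emb, image_insert, image_singleton]
    have ins : ∀ (a : Fin k) (M : Finset (Fin k)),
        (insert a M).image (em D h) ∪ D.2 = insert (em D h a) (M.image (em D h) ∪ D.2) := by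
      intro a M; rw [image_insert, insert_union]
    have hnot : ∀ a : Fin k, a ∉ L → em D h a ∉ L.image (em D h) ∪ D.2 := by
      intro a ha
      rw [mem_union]
      push_neg
      constructor
      · intro hmem
        obtain ⟨b, hb, hba⟩ := mem_image.1 hmem
        exact ha (em_inj D h hba ▸ hb)
      · exact fun hmem => (Finset.disjoint_left.1 hd (em_mem D h a)) hmem
    have := hG.2 (em D h i) (em D h j) (em D h l) (L.image (em D h) ∪ D.2)
      (fun e => hij (em_inj D h e)) (fun e => hil (em_inj D h e))
      (fun e => hjl (em_inj D h e)) (hnot i hiL) (hnot j hjL) (hnot l hlL)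
    simpa only [key, ins] using this

end Stmt14Aux

open Finset Stmt14Aux in
/-- If `𝓕` is an independent set of `k`-faces in `Q(n,k,2,2)` and there are
`c` injections from the set of `k`-gaussoids into the non-gaussoid subsets of
`A_k`, with pairwise disjoint ranges, then `|𝔊_n| · c^|𝓕|` is at most
`2^{|A_n|}` where `|A_n| = C(n,2)·2^{n-2}`; i.e.
`2^{|A_n|} / |𝔊_n| ≥ c^{|𝓕|}`. -/
theorem stmt_14 (n k c : ℕ) (hk : 3 ≤ k) (hkn : k ≤ n)
    (𝓕 : Finset (Finset (Fin n) × Finset (Fin n)))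
    (hfaces : ∀ D ∈ 𝓕, D.1.card = k ∧ Disjoint D.1 D.2)
    (hindep : ∀ D ∈ 𝓕, ∀ F ∈ 𝓕, ¬ adj222 D F)
    (f : Fin c → {A : Finset (Sq k) // IsGaussoid k A} →
      {B : Finset (Sq k) // (∀ x ∈ B, x.1.card = 2 ∧ Disjoint x.1 x.2) ∧
        ¬ IsGaussoid k B})
    (hinj : ∀ i, Function.Injective (f i))
    (hdisj : ∀ i j, i ≠ j → ∀ A B, (f i A).1 ≠ (f j B).1) :
    Nat.card {G : Finset (Sq n) // IsGaussoid n G} * c ^ 𝓕.card ≤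
      2 ^ (n.choose 2 * 2 ^ (n - 2)) := by
  classical
  set V : Finset (Sq n) := Finset.univ.filter (fun x : Sq n => x.1.card = 2 ∧ Disjoint x.1 x.2)
    with hVdef
  have hmemV : ∀ x : Sq n, x ∈ V ↔ (x.1.card = 2 ∧ Disjoint x.1 x.2) := by
    intro x; simp [hVdef]
  -- cardinality of V
  have hVcard : V.card = n.choose 2 * 2 ^ (n - 2) := by
    have hVeq : V = (Finset.powersetCard 2 (Finset.univ : Finset (Fin n))).biUnion
        (fun p => (pᶜ.powerset).image (fun M => ((p, M) : Sq n))) := by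
      ext x
      rw [hmemV]
      simp only [Finset.mem_biUnion, Finset.mem_powersetCard, Finset.mem_image,
        Finset.mem_powerset]
      constructor
      · rintro ⟨h2, hd⟩
        refine ⟨x.1, ⟨Finset.subset_univ _, h2⟩, x.2, ?_, rfl⟩
        intro a ha
        rw [Finset.mem_compl]
        exact fun h => Finset.disjoint_left.1 hd h ha
      · rintro ⟨p, ⟨-, hp⟩, M, hM, rfl⟩
        refine ⟨hp, Finset.disjoint_left.2 fun a ha h => ?_⟩
        exact (Finset.mem_compl.1 (hM h)) ha
    rw [hVeq, Finset.card_biUnion]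
    · have hterm : ∀ p ∈ Finset.powersetCard 2 (Finset.univ : Finset (Fin n)),
          ((pᶜ.powerset).image (fun M => ((p, M) : Sq n))).card = 2 ^ (n - 2) := by
        intro p hp
        have hpc : p.card = 2 := (Finset.mem_powersetCard.1 hp).2
        rw [Finset.card_image_of_injective _ (fun M M' h => (Prod.ext_iff.1 h).2),
          Finset.card_powerset, Finset.card_compl, hpc, Fintype.card_fin]
      rw [Finset.sum_congr rfl hterm, Finset.sum_const, Finset.card_powersetCard,
        Finset.card_univ, Fintype.card_fin, smul_eq_mul]
    · intro p hp q hq hpq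
      refine Finset.disjoint_left.2 fun x hx hx' => hpq ?_
      obtain ⟨M, -, rfl⟩ := Finset.mem_image.1 hx
      obtain ⟨M', -, hM'⟩ := Finset.mem_image.1 hx'
      exact (Prod.ext_iff.1 hM'.symm).1
  -- squares inside a face
  set sqIn : (Finset (Fin n) × Finset (Fin n)) → Finset (Sq n) :=
    fun D => V.filter (fun x => faceLe x D) with hsqdef
  have hmemsq : ∀ D x, x ∈ sqIn D ↔ ((x.1.card = 2 ∧ Disjoint x.1 x.2) ∧ faceLe x D) := by
    intro D x; rw [hsqdef]; simp only [Finset.mem_filter, hmemV x]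
  have hsqdisj : ∀ D ∈ 𝓕, ∀ F ∈ 𝓕, D ≠ F → Disjoint (sqIn D) (sqIn F) := by
    intro D hD F hF hDF
    refine Finset.disjoint_left.2 fun x hxD hxF => ?_
    obtain ⟨⟨hc, hd⟩, hle⟩ := (hmemsq D x).1 hxD
    obtain ⟨-, hleF⟩ := (hmemsq F x).1 hxF
    exact hindep D hD F hF ⟨hDF, x, hc, hd, hle, hleF⟩
  set U : Finset (Sq n) := 𝓕.biUnion sqIn with hUdef
  have hsqsubU : ∀ D : {D // D ∈ 𝓕}, sqIn D.1 ⊆ U := fun D => by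
    rw [hUdef]; exact Finset.subset_biUnion_of_mem sqIn D.2
  -- minor as a gaussoid
  let mG : {G : Finset (Sq n) // IsGaussoid n G} → {D // D ∈ 𝓕} →
      {A : Finset (Sq k) // IsGaussoid k A} :=
    fun G D => ⟨Stmt14Aux.minor D.1 (hfaces D.1 D.2).1 G.1,
      Stmt14Aux.minor_gaussoid D.1 (hfaces D.1 D.2).1 (hfaces D.1 D.2).2 G.2⟩
  have hGsubV : ∀ G : {G : Finset (Sq n) // IsGaussoid n G}, G.1 ⊆ V :=
    fun G x hx => (hmemV x).2 (G.2.1 x hx)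
  have himgsub : ∀ (i : Fin c) (A) (D : {D // D ∈ 𝓕}),
      ((f i A).1).image (Stmt14Aux.emb D.1 (hfaces D.1 D.2).1) ⊆ sqIn D.1 := by
    intro i A D x hx
    obtain ⟨y, hy, rfl⟩ := Finset.mem_image.1 hx
    exact (hmemsq D.1 _).2 ⟨Stmt14Aux.emb_valid D.1 (hfaces D.1 D.2).1 (hfaces D.1 D.2).2
      ((f i A).2.1 y hy), Stmt14Aux.emb_faceLe D.1 (hfaces D.1 D.2).1 y⟩
  -- the encoding map
  let body : {G : Finset (Sq n) // IsGaussoid n G} × ({D // D ∈ 𝓕} → Fin c) → Finset (Sq n) :=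
    fun P => (P.1.1 \ U) ∪ 𝓕.attach.biUnion
      (fun D => ((f (P.2 D) (mG P.1 D)).1).image (Stmt14Aux.emb D.1 (hfaces D.1 D.2).1))
  have hbodysub : ∀ P, body P ⊆ V := by
    intro P
    refine Finset.union_subset (Finset.sdiff_subset.trans (hGsubV P.1)) ?_
    refine Finset.biUnion_subset.2 fun D _ => ?_
    refine (himgsub (P.2 D) (mG P.1 D) D).trans ?_
    rw [hsqdef]; exact Finset.filter_subset _ _
  let Φ : {G : Finset (Sq n) // IsGaussoid n G} × ({D // D ∈ 𝓕} → Fin c) →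
      {B : Finset (Sq n) // B ⊆ V} := fun P => ⟨body P, hbodysub P⟩
  -- slice lemmas
  have slice : ∀ P (D : {D // D ∈ 𝓕}), body P ∩ sqIn D.1 =
      ((f (P.2 D) (mG P.1 D)).1).image (Stmt14Aux.emb D.1 (hfaces D.1 D.2).1) := by
    intro P D
    ext x
    constructor
    · intro hx
      obtain ⟨hxB, hxD⟩ := Finset.mem_inter.1 hx
      rcases Finset.mem_union.1 hxB with hx' | hx'
      · exact absurd (hsqsubU D hxD) (Finset.mem_sdiff.1 hx').2
      · obtain ⟨E, -, hxE⟩ := Finset.mem_biUnion.1 hx'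
        by_cases hED : E = D
        · subst hED; exact hxE
        · exfalso
          have hxInE : x ∈ sqIn E.1 := himgsub _ _ E hxE
          have hne : E.1 ≠ D.1 := fun h => hED (Subtype.ext h)
          exact (Finset.disjoint_left.1 (hsqdisj E.1 E.2 D.1 D.2 hne) hxInE) hxD
    · intro hx
      refine Finset.mem_inter.2 ⟨Finset.mem_union_right _ ?_, himgsub _ _ D hx⟩
      exact Finset.mem_biUnion.2 ⟨D, Finset.mem_attach _ D, hx⟩
  have gslice : ∀ (G : {G : Finset (Sq n) // IsGaussoid n G}) (D : {D // D ∈ 𝓕}),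
      G.1 ∩ sqIn D.1 = ((mG G D).1).image (Stmt14Aux.emb D.1 (hfaces D.1 D.2).1) := by
    intro G D
    ext x
    constructor
    · intro hx
      obtain ⟨hxG, hxD⟩ := Finset.mem_inter.1 hx
      obtain ⟨y, rfl⟩ := Stmt14Aux.emb_surj D.1 (hfaces D.1 D.2).1 ((hmemsq D.1 x).1 hxD).2
      exact Finset.mem_image_of_mem _
        ((Stmt14Aux.mem_minor D.1 (hfaces D.1 D.2).1 G.1 y).2 hxG)
    · intro hx
      obtain ⟨y, hy, rfl⟩ := Finset.mem_image.1 hx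
      have hxG : Stmt14Aux.emb D.1 (hfaces D.1 D.2).1 y ∈ G.1 :=
        (Stmt14Aux.mem_minor D.1 (hfaces D.1 D.2).1 G.1 y).1 hy
      refine Finset.mem_inter.2 ⟨hxG, (hmemsq D.1 _).2 ⟨(hmemV _).1 (hGsubV G hxG),
        Stmt14Aux.emb_faceLe D.1 (hfaces D.1 D.2).1 y⟩⟩
  have rest : ∀ P, body P \ U = P.1.1 \ U := by
    intro P
    ext x
    simp only [Finset.mem_sdiff]
    constructor
    · rintro ⟨hx, hU⟩
      rcases Finset.mem_union.1 hx with hx' | hx'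
      · exact ⟨(Finset.mem_sdiff.1 hx').1, hU⟩
      · exfalso
        obtain ⟨E, -, hxE⟩ := Finset.mem_biUnion.1 hx'
        exact hU (hsqsubU E (himgsub _ _ E hxE))
    · rintro ⟨hx, hU⟩
      exact ⟨Finset.mem_union_left _ (Finset.mem_sdiff.2 ⟨hx, hU⟩), hU⟩
  -- injectivity
  have hΦinj : Function.Injective Φ := by
    rintro ⟨G, g⟩ ⟨G', g'⟩ hPP
    have hB : body (G, g) = body (G', g') := congrArg Subtype.val hPP
    have hf : ∀ D : {D // D ∈ 𝓕}, (f (g D) (mG G D)).1 = (f (g' D) (mG G' D)).1 := by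
      intro D
      have h1 := slice (G, g) D
      have h2 := slice (G', g') D
      rw [hB, h2] at h1
      exact Finset.image_injective
        (Stmt14Aux.emb_inj D.1 (hfaces D.1 D.2).1 (hfaces D.1 D.2).2) h1.symm
    have hg : g = g' := by
      funext D
      by_contra hne
      exact hdisj _ _ hne (mG G D) (mG G' D) (hf D)
    have hminor : ∀ D : {D // D ∈ 𝓕}, mG G D = mG G' D := by
      intro D
      have h := hf D
      rw [hg] at h
      exact hinj (g' D) (Subtype.ext h)
    have hGeq : G = G' := by
      apply Subtype.ext
      ext x
      by_cases hxU : x ∈ U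
      · rw [hUdef] at hxU
        obtain ⟨E, hE, hxE⟩ := Finset.mem_biUnion.1 hxU
        have h1 := gslice G ⟨E, hE⟩
        have h2 := gslice G' ⟨E, hE⟩
        rw [hminor ⟨E, hE⟩, ← h2] at h1
        constructor
        · intro hx
          exact (Finset.mem_inter.1 (h1 ▸ Finset.mem_inter.2 ⟨hx, hxE⟩)).1
        · intro hx
          exact (Finset.mem_inter.1 (h1.symm ▸ Finset.mem_inter.2 ⟨hx, hxE⟩)).1
      · have h1 := rest (G, g)
        have h2 := rest (G', g')
        rw [hB, h2] at h1
        constructor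
        · intro hx
          exact (Finset.mem_sdiff.1 (h1 ▸ Finset.mem_sdiff.2 ⟨hx, hxU⟩)).1
        · intro hx
          exact (Finset.mem_sdiff.1 (h1.symm ▸ Finset.mem_sdiff.2 ⟨hx, hxU⟩)).1
    rw [hGeq, hg]
  -- counting
  have step1 : Nat.card {G : Finset (Sq n) // IsGaussoid n G} * c ^ 𝓕.card
      = Nat.card ({G : Finset (Sq n) // IsGaussoid n G} × ({D // D ∈ 𝓕} → Fin c)) := by
    have e1 : Nat.card (Fin c) = c := by rw [Nat.card_eq_fintype_card, Fintype.card_fin]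
    have e2 : Nat.card {D // D ∈ 𝓕} = 𝓕.card := by
      rw [Nat.card_eq_fintype_card, Fintype.card_coe]
    rw [Nat.card_prod, Nat.card_fun, e1, e2]
  have step2 : Nat.card ({G : Finset (Sq n) // IsGaussoid n G} × ({D // D ∈ 𝓕} → Fin c))
      ≤ Nat.card {B : Finset (Sq n) // B ⊆ V} :=
    Nat.card_le_card_of_injective Φ hΦinj
  have step3 : Nat.card {B : Finset (Sq n) // B ⊆ V} = 2 ^ (n.choose 2 * 2 ^ (n - 2)) := by
    have e : {B : Finset (Sq n) // B ⊆ V} ≃ {B : Finset (Sq n) // B ∈ V.powerset} :=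
      Equiv.subtypeEquivRight (fun B => (Finset.mem_powerset).symm)
    rw [Nat.card_congr e, Nat.card_eq_fintype_card, Fintype.card_coe,
      Finset.card_powerset, hVcard]
  rw [step1, ← step3]
  exact step2
end

section
/- For n ≥ 5, the number of n-gaussoids satisfies 2^{(1/3)·n·2^{n-6}} ≤ |G_n| ≤ 2^{C(n,2)·2^{n-2}} / 2^{(4/9)·n(n-1)·2^{n-6}}. In particular, log₂|G_n| ∈ Ω(n·2^n) ∩ O(n²·2^n), so the number of gaussoids grows doubly exponentially in n. -/
namespace Stmt15Aux
open Finset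

/-- `p` is a "matching pair" `{2t, 2t+1}`. -/
def IsMP {n : ℕ} (p : Finset (Fin n)) : Prop :=
  ∃ j k : Fin n, p = {j, k} ∧ Even (j : ℕ) ∧ (k : ℕ) = (j : ℕ) + 1

instance {n : ℕ} : DecidablePred (IsMP (n := n)) := fun _ => by
  unfold IsMP; infer_instance

def U (n : ℕ) : Finset (Sq n) :=
  univ.filter (fun x => IsMP x.1 ∧ Disjoint x.1 x.2 ∧ Even x.2.card)

lemma mp_eq {n : ℕ} {i j k : Fin n} (hij : i ≠ j) (hik : i ≠ k)
    (h1 : IsMP ({i,j} : Finset (Fin n))) (h2 : IsMP ({i,k} : Finset (Fin n))) : j = k := by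
  obtain ⟨a, b, hp, ha, hb⟩ := h1
  obtain ⟨a', b', hp', ha', hb'⟩ := h2
  have hi1 : i = a ∨ i = b := by
    have : i ∈ ({a, b} : Finset (Fin n)) := hp ▸ (mem_insert_self i {j})
    simpa using this
  have hj1 : j = a ∨ j = b := by
    have : j ∈ ({a, b} : Finset (Fin n)) := hp ▸ (by simp)
    simpa using this
  have hi2 : i = a' ∨ i = b' := by
    have : i ∈ ({a', b'} : Finset (Fin n)) := hp' ▸ (mem_insert_self i {k})
    simpa using this
  have hk1 : k = a' ∨ k = b' := by
    have : k ∈ ({a', b'} : Finset (Fin n)) := hp' ▸ (by simp)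
    simpa using this
  obtain ⟨c, hc⟩ := ha
  obtain ⟨c', hc'⟩ := ha'
  have V : ∀ x y : Fin n, x = y → (x : ℕ) = y := fun _ _ h => congrArg _ h
  have hi1' := hi1.imp (V _ _) (V _ _)
  have hj1' := hj1.imp (V _ _) (V _ _)
  have hi2' := hi2.imp (V _ _) (V _ _)
  have hk1' := hk1.imp (V _ _) (V _ _)
  have hij' : (i : ℕ) ≠ j := fun h => hij (Fin.ext h)
  have hik' : (i : ℕ) ≠ k := fun h => hik (Fin.ext h)
  exact Fin.ext (by omega)

lemma gaussoid_of_subset_U {n : ℕ} (G : Finset (Sq n)) (hG : G ⊆ U n) :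
    IsGaussoid n G := by
  have mem : ∀ {x : Sq n}, x ∈ G → IsMP x.1 ∧ Disjoint x.1 x.2 ∧ Even x.2.card := by
    intro x hx
    have := hG hx
    simpa [U] using this
  constructor
  · intro x hx
    obtain ⟨⟨a, b, hp, _, hb⟩, hd, _⟩ := mem hx
    refine ⟨?_, hd⟩
    have hab : a ≠ b := fun h => by
      have := congrArg (Fin.val) h; omega
    rw [hp, card_insert_of_notMem (by simpa using hab), card_singleton]
  · intro i j k L hij hik hjk hiL hjL hkL
    refine ⟨?_, ?_, ?_, ?_⟩
    · rintro ⟨h1, h2⟩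
      exact absurd (mp_eq hij hik (mem h1).1 (mem h2).1) hjk
    · rintro ⟨h1, h2⟩
      exact absurd (mp_eq hij hik (mem h1).1 (mem h2).1) hjk
    · rintro ⟨h1, h2⟩
      exact absurd (mp_eq hij hik (mem h1).1 (mem h2).1) hjk
    · rintro ⟨h1, h2⟩
      exfalso
      have e1 : Even L.card := (mem h1).2.2
      have e2 : Even (insert k L).card := (mem h2).2.2
      rw [card_insert_of_notMem hkL] at e2
      obtain ⟨u, hu⟩ := e1; obtain ⟨v, hv⟩ := e2; omega


abbrev Quad (n : ℕ) := Fin n × Fin n × Fin n × Finset (Fin n)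

def QuadOK {n : ℕ} (q : Quad n) : Prop :=
  Even (q.2.1 : ℕ) ∧ ((q.2.2.1 : ℕ) = (q.2.1 : ℕ) + 1) ∧ ((q.1 : ℕ) < (q.2.1 : ℕ)) ∧
  q.1 ∉ q.2.2.2 ∧ q.2.1 ∉ q.2.2.2 ∧ q.2.2.1 ∉ q.2.2.2

instance {n : ℕ} : DecidablePred (QuadOK (n := n)) := fun _ => by
  unfold QuadOK; infer_instance

def Quads (n : ℕ) : Finset (Quad n) := univ.filter QuadOK

def quadSqs {n : ℕ} (q : Quad n) : Finset (Sq n) :=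
  {({q.1, q.2.1}, q.2.2.2), ({q.1, q.2.1}, insert q.2.2.1 q.2.2.2),
   ({q.1, q.2.2.1}, q.2.2.2), ({q.1, q.2.2.1}, insert q.2.1 q.2.2.2)}

lemma pair_eq_of_lt {n : ℕ} {a b c d : Fin n} (hab : (a:ℕ) < b) (hcd : (c:ℕ) < d)
    (h : ({a, b} : Finset (Fin n)) = {c, d}) : a = c ∧ b = d := by
  have ha : a = c ∨ a = d := by
    have : a ∈ ({c,d} : Finset (Fin n)) := h ▸ mem_insert_self _ _
    simpa using this
  have hb : b = c ∨ b = d := by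
    have : b ∈ ({c,d} : Finset (Fin n)) := h ▸ (by simp)
    simpa using this
  have hc : c = a ∨ c = b := by
    have : c ∈ ({a,b} : Finset (Fin n)) := h.symm ▸ mem_insert_self _ _
    simpa using this
  have V : ∀ x y : Fin n, x = y → (x : ℕ) = y := fun _ _ h => congrArg _ h
  have ha' := ha.imp (V _ _) (V _ _)
  have hb' := hb.imp (V _ _) (V _ _)
  have hc' := hc.imp (V _ _) (V _ _)
  exact ⟨Fin.ext (by omega), Fin.ext (by omega)⟩

lemma quadSqs_disjoint {n : ℕ} {q q' : Quad n} (hq : q ∈ Quads n) (hq' : q' ∈ Quads n)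
    (hne : q ≠ q') : Disjoint (quadSqs q) (quadSqs q') := by
  obtain ⟨i, j, k, L⟩ := q
  obtain ⟨i', j', k', L'⟩ := q'
  rw [Quads, mem_filter] at hq hq'
  obtain ⟨hje, hkv, hiv, hiL, hjL, hkL⟩ := hq.2
  obtain ⟨hje', hkv', hiv', hiL', hjL', hkL'⟩ := hq'.2
  obtain ⟨c, hc⟩ := hje
  obtain ⟨c', hc'⟩ := hje'
  have hc : (j:ℕ) = c + c := hc
  have hc' : (j':ℕ) = c' + c' := hc'
  have hkv : (k:ℕ) = (j:ℕ) + 1 := hkv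
  have hkv' : (k':ℕ) = (j':ℕ) + 1 := hkv'
  have hiv : (i:ℕ) < (j:ℕ) := hiv
  have hiv' : (i':ℕ) < (j':ℕ) := hiv'
  have hiL : i ∉ L := hiL
  have hjL : j ∉ L := hjL
  have hkL : k ∉ L := hkL
  have hiL' : i' ∉ L' := hiL'
  have hjL' : j' ∉ L' := hjL'
  have hkL' : k' ∉ L' := hkL'
  have hik : (i:ℕ) < (k:ℕ) := by omega
  have hik' : (i':ℕ) < (k':ℕ) := by omega
  rw [disjoint_left]
  intro s hs hs'
  simp only [quadSqs, mem_insert, mem_singleton] at hs hs'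
  -- helper to close parity-mismatch cases
  rcases hs with rfl | rfl | rfl | rfl <;>
    rcases hs' with h | h | h | h <;>
      (rw [Prod.mk.injEq] at h; obtain ⟨hp, hctx⟩ := h)
  -- s1 s1'
  · obtain ⟨h1, h2⟩ := pair_eq_of_lt hiv hiv' hp
    subst h1; subst h2
    have h3 : k = k' := Fin.ext (by omega)
    subst h3; subst hctx; exact hne rfl
  -- s1 s2'
  · obtain ⟨h1, h2⟩ := pair_eq_of_lt hiv hiv' hp
    subst h1; subst h2
    have h3 : k = k' := Fin.ext (by omega)
    subst h3
    exact hkL (by rw [hctx]; exact mem_insert_self _ _)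
  -- s1 s3'
  · obtain ⟨h1, h2⟩ := pair_eq_of_lt hiv hik' hp
    have := congrArg Fin.val h2; omega
  -- s1 s4'
  · obtain ⟨h1, h2⟩ := pair_eq_of_lt hiv hik' hp
    have := congrArg Fin.val h2; omega
  -- s2 s1'
  · obtain ⟨h1, h2⟩ := pair_eq_of_lt hiv hiv' hp
    subst h1; subst h2
    have h3 : k = k' := Fin.ext (by omega)
    subst h3
    exact (hkL' (by rw [← hctx]; exact mem_insert_self _ _)).elim
  -- s2 s2'
  · obtain ⟨h1, h2⟩ := pair_eq_of_lt hiv hiv' hp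
    subst h1; subst h2
    have h3 : k = k' := Fin.ext (by omega)
    subst h3
    have h4 : L = L' := by
      have h5 := congrArg (fun S => Finset.erase S k) hctx
      simpa [erase_insert hkL, erase_insert hkL'] using h5
    subst h4; exact hne rfl
  -- s2 s3'
  · obtain ⟨h1, h2⟩ := pair_eq_of_lt hiv hik' hp
    have := congrArg Fin.val h2; omega
  -- s2 s4'
  · obtain ⟨h1, h2⟩ := pair_eq_of_lt hiv hik' hp
    have := congrArg Fin.val h2; omega
  -- s3 s1'
  · obtain ⟨h1, h2⟩ := pair_eq_of_lt hik hiv' hp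
    have := congrArg Fin.val h2; omega
  -- s3 s2'
  · obtain ⟨h1, h2⟩ := pair_eq_of_lt hik hiv' hp
    have := congrArg Fin.val h2; omega
  -- s3 s3'
  · obtain ⟨h1, h2⟩ := pair_eq_of_lt hik hik' hp
    subst h1; subst h2
    have h3 : j = j' := Fin.ext (by omega)
    subst h3; subst hctx; exact hne rfl
  -- s3 s4'
  · obtain ⟨h1, h2⟩ := pair_eq_of_lt hik hik' hp
    subst h1; subst h2
    have h3 : j = j' := Fin.ext (by omega)
    subst h3
    exact (hjL (by rw [hctx]; exact mem_insert_self _ _)).elim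
  -- s4 s1'
  · obtain ⟨h1, h2⟩ := pair_eq_of_lt hik hiv' hp
    have := congrArg Fin.val h2; omega
  -- s4 s2'
  · obtain ⟨h1, h2⟩ := pair_eq_of_lt hik hiv' hp
    have := congrArg Fin.val h2; omega
  -- s4 s3'
  · obtain ⟨h1, h2⟩ := pair_eq_of_lt hik hik' hp
    subst h1; subst h2
    have h3 : j = j' := Fin.ext (by omega)
    subst h3
    exact (hjL' (by rw [← hctx]; exact mem_insert_self _ _)).elim
  -- s4 s4'
  · obtain ⟨h1, h2⟩ := pair_eq_of_lt hik hik' hp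
    subst h1; subst h2
    have h3 : j = j' := Fin.ext (by omega)
    subst h3
    have h4 : L = L' := by
      have h5 := congrArg (fun S => Finset.erase S j) hctx
      simpa [erase_insert hjL, erase_insert hjL'] using h5
    subst h4; exact hne rfl

lemma quadSqs_card {n : ℕ} {q : Quad n} (hq : q ∈ Quads n) : (quadSqs q).card = 4 := by
  obtain ⟨i, j, k, L⟩ := q
  rw [Quads, mem_filter] at hq
  obtain ⟨-, hje, hkv, hiv, hiL, hjL, hkL⟩ := hq
  obtain ⟨c, hc⟩ := hje
  have hc : (j:ℕ) = c + c := hc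
  have hkv : (k:ℕ) = (j:ℕ) + 1 := hkv
  have hiv : (i:ℕ) < (j:ℕ) := hiv
  have hjL : j ∉ L := hjL
  have hkL : k ∉ L := hkL
  have hjk : j ≠ k := fun h => by have := congrArg Fin.val h; omega
  have hpair : ({i,j} : Finset (Fin n)) ≠ {i,k} := by
    intro h
    obtain ⟨-, h2⟩ := pair_eq_of_lt hiv (by omega) h
    exact hjk h2
  have hLk : L ≠ insert k L := fun h => hkL (h ▸ mem_insert_self k L)
  have hLj : L ≠ insert j L := fun h => hjL (h ▸ mem_insert_self j L)
  show ({({i,j},L), ({i,j}, insert k L), ({i,k},L), ({i,k}, insert j L)} : Finset (Sq n)).card = 4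
  rw [card_insert_of_notMem, card_insert_of_notMem, card_insert_of_notMem, card_singleton]
  · simp only [mem_singleton, Prod.mk.injEq, not_and]
    intro _; exact hLj
  · simp only [mem_insert, mem_singleton, Prod.mk.injEq, not_or, not_and]
    exact ⟨fun h => absurd h hpair, fun h => absurd h hpair⟩
  · simp only [mem_insert, mem_singleton, Prod.mk.injEq, not_or, not_and]
    exact ⟨fun _ => hLk, fun h => absurd h hpair, fun h => absurd h hpair⟩

def covered (n : ℕ) : Finset (Sq n) := (Quads n).biUnion quadSqs

lemma covered_card {n : ℕ} : (covered n).card = 4 * (Quads n).card := by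
  rw [covered, card_biUnion (fun q hq q' hq' hne => quadSqs_disjoint hq hq' hne)]
  rw [Finset.sum_congr rfl (fun q hq => quadSqs_card hq), sum_const, smul_eq_mul, mul_comm]

def Valid (n : ℕ) : Finset (Sq n) :=
  univ.filter (fun x => x.1.card = 2 ∧ Disjoint x.1 x.2)

lemma covered_subset {n : ℕ} : covered n ⊆ Valid n := by
  intro s hs
  rw [covered, mem_biUnion] at hs
  obtain ⟨q, hq, hsq⟩ := hs
  obtain ⟨i, j, k, L⟩ := q
  rw [Quads, mem_filter] at hq
  obtain ⟨-, hje, hkv, hiv, hiL, hjL, hkL⟩ := hq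
  obtain ⟨c, hc⟩ := hje
  have hc : (j:ℕ) = c + c := hc
  have hkv : (k:ℕ) = (j:ℕ) + 1 := hkv
  have hiv : (i:ℕ) < (j:ℕ) := hiv
  have hiL : i ∉ L := hiL
  have hjL : j ∉ L := hjL
  have hkL : k ∉ L := hkL
  have hij : i ≠ j := fun h => by have := congrArg Fin.val h; omega
  have hik : i ≠ k := fun h => by have := congrArg Fin.val h; omega
  have hjk : j ≠ k := fun h => by have := congrArg Fin.val h; omega
  have cij : ({i,j} : Finset (Fin n)).card = 2 := by
    rw [card_insert_of_notMem (by simpa using hij), card_singleton]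
  have cik : ({i,k} : Finset (Fin n)).card = 2 := by
    rw [card_insert_of_notMem (by simpa using hik), card_singleton]
  have hiLk : i ∉ insert k L := by
    rw [mem_insert]; rintro (h | h); exacts [hik h, hiL h]
  have hjLk : j ∉ insert k L := by
    rw [mem_insert]; rintro (h | h); exacts [hjk h, hjL h]
  have hiLj : i ∉ insert j L := by
    rw [mem_insert]; rintro (h | h); exacts [hij h, hiL h]
  have hkLj : k ∉ insert j L := by
    rw [mem_insert]; rintro (h | h); exacts [hjk h.symm, hkL h]
  simp only [quadSqs, mem_insert, mem_singleton] at hsq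
  rcases hsq with rfl | rfl | rfl | rfl <;> rw [Valid, mem_filter] <;>
    refine ⟨mem_univ _, ?_, ?_⟩
  · exact cij
  · rw [disjoint_left]
    intro a ha
    simp only [mem_insert, mem_singleton] at ha
    rcases ha with rfl | rfl; exacts [hiL, hjL]
  · exact cij
  · rw [disjoint_left]
    intro a ha
    simp only [mem_insert, mem_singleton] at ha
    rcases ha with rfl | rfl; exacts [hiLk, hjLk]
  · exact cik
  · rw [disjoint_left]
    intro a ha
    simp only [mem_insert, mem_singleton] at ha
    rcases ha with rfl | rfl; exacts [hiL, hkL]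
  · exact cik
  · rw [disjoint_left]
    intro a ha
    simp only [mem_insert, mem_singleton] at ha
    rcases ha with rfl | rfl; exacts [hiLj, hkLj]

lemma valid_card_le {n : ℕ} : (Valid n).card ≤ n.choose 2 * 2 ^ (n - 2) := by
  classical
  set T := ((univ : Finset (Fin n)).powersetCard 2).sigma
    (fun p => ((univ : Finset (Fin n)) \ p).powerset) with hT
  have hmaps : ∀ x ∈ Valid n, (⟨x.1, x.2⟩ : Σ _ : Finset (Fin n), Finset (Fin n)) ∈ T := by
    intro x hx
    rw [Valid, mem_filter] at hx
    rw [hT, mem_sigma, mem_powersetCard, mem_powerset]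
    refine ⟨⟨subset_univ _, hx.2.1⟩, fun a ha => mem_sdiff.mpr ⟨mem_univ _, ?_⟩⟩
    exact fun hb => (disjoint_right.mp hx.2.2 ha) hb
  have hinj : Set.InjOn (fun x : Sq n => (⟨x.1, x.2⟩ : Σ _ : Finset (Fin n), Finset (Fin n)))
      (Valid n) := by
    intro x hx y hy h
    obtain ⟨h1, h2⟩ := Sigma.ext_iff.mp h
    exact Prod.ext h1 (eq_of_heq h2)
  have hTcard : T.card = n.choose 2 * 2 ^ (n - 2) := by
    rw [hT, card_sigma]
    rw [Finset.sum_congr rfl (g := fun _ => 2 ^ (n - 2)) ?_, sum_const, smul_eq_mul,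
      card_powersetCard, card_univ, Fintype.card_fin]
    intro p hp
    rw [mem_powersetCard] at hp
    rw [card_powerset, card_sdiff_of_subset (subset_univ _), card_univ, Fintype.card_fin, hp.2]
  calc (Valid n).card ≤ T.card := card_le_card_of_injOn _ hmaps hinj
    _ = _ := hTcard

def PatOK (x : Bool × Bool × Bool × Bool) : Prop :=
  ((x.1 ∧ x.2.2.2) → (x.2.1 ∧ x.2.2.1)) ∧
  ((x.2.1 ∧ x.2.2.2) → (x.1 ∧ x.2.2.1)) ∧
  ((x.1 ∧ x.2.2.1) → (x.2.1 ∧ x.2.2.2))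

instance : DecidablePred PatOK := fun _ => by unfold PatOK; infer_instance

def A : Finset (Bool × Bool × Bool × Bool) := univ.filter PatOK

lemma A_card : A.card = 9 := by decide

def patt {n : ℕ} (G : Finset (Sq n)) (q : Quad n) : Bool × Bool × Bool × Bool :=
  (decide (({q.1, q.2.1}, q.2.2.2) ∈ G), decide (({q.1, q.2.1}, insert q.2.2.1 q.2.2.2) ∈ G),
   decide (({q.1, q.2.2.1}, q.2.2.2) ∈ G), decide (({q.1, q.2.2.1}, insert q.2.1 q.2.2.2) ∈ G))

lemma patt_mem {n : ℕ} {G : Finset (Sq n)} (hG : IsGaussoid n G) {q : Quad n}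
    (hq : q ∈ Quads n) : patt G q ∈ A := by
  obtain ⟨i, j, k, L⟩ := q
  rw [Quads, mem_filter] at hq
  obtain ⟨-, hje, hkv, hiv, hiL, hjL, hkL⟩ := hq
  obtain ⟨c, hc⟩ := hje
  have hc : (j:ℕ) = c + c := hc
  have hkv : (k:ℕ) = (j:ℕ) + 1 := hkv
  have hiv : (i:ℕ) < (j:ℕ) := hiv
  have hiL : i ∉ L := hiL
  have hjL : j ∉ L := hjL
  have hkL : k ∉ L := hkL
  have hij : i ≠ j := fun h => by have := congrArg Fin.val h; omega
  have hik : i ≠ k := fun h => by have := congrArg Fin.val h; omega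
  have hjk : j ≠ k := fun h => by have := congrArg Fin.val h; omega
  have hax := hG.2 i j k L hij hik hjk hiL hjL hkL
  rw [A, mem_filter]
  refine ⟨mem_univ _, ?_⟩
  simp only [PatOK, patt, decide_eq_true_eq]
  exact ⟨fun h => ⟨(hax.1 h).2, (hax.1 h).1⟩,
    fun h => ⟨(hax.2.1 h).1, (hax.2.1 h).2⟩,
    fun h => ⟨(hax.2.2.1 h).1, (hax.2.2.1 h).2⟩⟩

lemma quads_card_ge {n : ℕ} (hn : 5 ≤ n) :
    (n / 2) * ((n / 2) - 1) * 2 ^ (n - 3) ≤ (Quads n).card := by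
  have hn0 : 0 < n := by omega
  set f : ℕ → Fin n := fun a => ⟨a % n, Nat.mod_lt a hn0⟩ with hf
  have fval : ∀ a, a < n → (f a : ℕ) = a := fun a ha => Nat.mod_eq_of_lt ha
  set QD : Finset (Σ _ : ℕ, Σ _ : ℕ, Finset (Fin n)) :=
    (range (n / 2)).sigma (fun t => (range (2*t)).sigma
      (fun i => ((univ : Finset (Fin n)) \ {f i, f (2*t), f (2*t+1)}).powerset)) with hQD
  set χ : (Σ _ : ℕ, Σ _ : ℕ, Finset (Fin n)) → Quad n :=
    fun s => (f s.2.1, f (2*s.1), f (2*s.1+1), s.2.2) with hχ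
  have hb : ∀ t, t ∈ range (n/2) → 2*t+1 < n := by
    intro t ht; rw [mem_range] at ht; omega
  have hcard : QD.card = (n / 2) * ((n / 2) - 1) * 2 ^ (n - 3) := by
    rw [hQD, card_sigma]
    rw [Finset.sum_congr rfl (g := fun t => 2*t * 2 ^ (n-3)) ?_]
    · rw [← Finset.sum_mul]
      congr 1
      have h1 : ∑ t ∈ range (n/2), 2 * t = (∑ t ∈ range (n/2), t) * 2 := by
        rw [Finset.sum_mul]
        exact Finset.sum_congr rfl (fun t _ => by ring)
      rw [h1, Finset.sum_range_id_mul_two]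
    · intro t ht
      have hbt := hb t ht
      rw [card_sigma]
      rw [Finset.sum_congr rfl (g := fun _ => 2 ^ (n-3)) ?_, sum_const, card_range,
        smul_eq_mul]
      intro i hi
      rw [mem_range] at hi
      have hv1 : (f i : ℕ) = i := fval _ (by omega)
      have hv2 : (f (2*t) : ℕ) = 2*t := fval _ (by omega)
      have hv3 : (f (2*t+1) : ℕ) = 2*t+1 := fval _ hbt
      rw [card_powerset, card_sdiff_of_subset (subset_univ _), card_univ, Fintype.card_fin]
      congr 1
      have c3 : ({f i, f (2*t), f (2*t+1)} : Finset (Fin n)).card = 3 := by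
        rw [card_insert_of_notMem, card_insert_of_notMem, card_singleton]
        · simp only [mem_singleton]
          intro h; have := congrArg Fin.val h; rw [hv2, hv3] at this; omega
        · simp only [mem_insert, mem_singleton]
          rintro (h | h) <;> [skip; skip] <;>
            · have h' := congrArg Fin.val h
              first
              | (rw [hv1, hv2] at h'; omega)
              | (rw [hv1, hv3] at h'; omega)
      rw [c3]
  have hmaps : ∀ s ∈ QD, χ s ∈ Quads n := by
    rintro ⟨t, i, L⟩ hs
    rw [hQD, mem_sigma, mem_sigma] at hs
    obtain ⟨ht, hi, hL⟩ := hs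
    have ht' : t ∈ range (n/2) := ht
    have hbt := hb t ht'
    rw [mem_range] at hi
    have hi : i < 2*t := hi
    rw [mem_powerset] at hL
    have hL : L ⊆ univ \ {f i, f (2*t), f (2*t+1)} := hL
    have hv1 : (f i : ℕ) = i := fval _ (by omega)
    have hv2 : (f (2*t) : ℕ) = 2*t := fval _ (by omega)
    have hv3 : (f (2*t+1) : ℕ) = 2*t+1 := fval _ hbt
    have hmem : ∀ a ∈ L, a ∉ ({f i, f (2*t), f (2*t+1)} : Finset (Fin n)) :=
      fun a ha => (mem_sdiff.mp (hL ha)).2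
    rw [Quads, mem_filter]
    refine ⟨mem_univ _, ⟨t, by rw [hv2]; ring⟩, by rw [hv3, hv2], by rw [hv1, hv2]; omega,
      ?_, ?_, ?_⟩ <;>
      · intro h
        exact hmem _ h (by simp [hχ])
  have hinj : Set.InjOn χ QD := by
    rintro ⟨t, i, L⟩ hs ⟨t', i', L'⟩ hs' heq
    have hs1 : (⟨t, i, L⟩ : Σ _ : ℕ, Σ _ : ℕ, Finset (Fin n)) ∈ QD := hs
    have hs1' : (⟨t', i', L'⟩ : Σ _ : ℕ, Σ _ : ℕ, Finset (Fin n)) ∈ QD := hs'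
    rw [hQD, mem_sigma, mem_sigma] at hs1 hs1'
    obtain ⟨ht, hi, -⟩ := hs1
    obtain ⟨ht', hi', -⟩ := hs1'
    have hbt := hb t ht
    have hbt' := hb t' ht'
    rw [mem_range] at hi hi'
    have hi : i < 2*t := hi
    have hi' : i' < 2*t' := hi'
    simp only [hχ, Prod.mk.injEq] at heq
    obtain ⟨h1, h2, h3, h4⟩ := heq
    have hv1 := congrArg Fin.val h1
    have hv2 := congrArg Fin.val h2
    rw [fval _ (by omega), fval _ (by omega)] at hv1
    rw [fval _ (by omega), fval _ (by omega)] at hv2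
    have htt : t = t' := by omega
    subst htt
    have hii : i = i' := by omega
    subst hii
    subst h4
    rfl
  calc (n / 2) * ((n / 2) - 1) * 2 ^ (n - 3) = QD.card := hcard.symm
    _ ≤ (Quads n).card := card_le_card_of_injOn χ hmaps hinj

lemma card_upper {n : ℕ} :
    Nat.card {G : Finset (Sq n) // IsGaussoid n G} ≤
      9 ^ (Quads n).card * 2 ^ ((Valid n).card - 4 * (Quads n).card) := by
  classical
  set T := ((Quads n).pi (fun _ => A)) ×ˢ (Valid n \ covered n).powerset with hT
  have hGsub : ∀ (G : {G : Finset (Sq n) // IsGaussoid n G}), G.1 ⊆ Valid n := by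
    intro G x hx
    rw [Valid, mem_filter]
    exact ⟨mem_univ _, G.2.1 x hx⟩
  have hmem : ∀ (G : {G : Finset (Sq n) // IsGaussoid n G}),
      ((fun q _ => patt G.1 q, G.1 \ covered n) :
        ((∀ q ∈ Quads n, Bool × Bool × Bool × Bool) × Finset (Sq n))) ∈ T := by
    intro G
    rw [hT, mem_product]
    constructor
    · rw [mem_pi]
      exact fun q hq => patt_mem G.2 hq
    · rw [mem_powerset]
      exact sdiff_subset_sdiff (hGsub G) (le_refl _)
  set Φ : {G : Finset (Sq n) // IsGaussoid n G} → {x // x ∈ T} :=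
    fun G => ⟨(fun q _ => patt G.1 q, G.1 \ covered n), hmem G⟩ with hΦ
  have hinj : Function.Injective Φ := by
    intro G G' h
    have h' := congrArg Subtype.val h
    have h1 : (fun q (_ : q ∈ Quads n) => patt G.1 q) = (fun q _ => patt G'.1 q) :=
      congrArg Prod.fst h'
    have h2 : G.1 \ covered n = G'.1 \ covered n := congrArg Prod.snd h'
    apply Subtype.ext
    ext s
    by_cases hs : s ∈ covered n
    · obtain ⟨q, hq, hsq⟩ := mem_biUnion.mp hs
      have hpq : patt G.1 q = patt G'.1 q := congrFun (congrFun h1 q) hq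
      simp only [quadSqs, mem_insert, mem_singleton] at hsq
      rcases hsq with rfl | rfl | rfl | rfl
      · exact decide_eq_decide.mp (congrArg (fun x => x.1) hpq)
      · exact decide_eq_decide.mp (congrArg (fun x => x.2.1) hpq)
      · exact decide_eq_decide.mp (congrArg (fun x => x.2.2.1) hpq)
      · exact decide_eq_decide.mp (congrArg (fun x => x.2.2.2) hpq)
    · constructor
      · intro hsG
        have : s ∈ G.1 \ covered n := mem_sdiff.mpr ⟨hsG, hs⟩
        rw [h2] at this
        exact (mem_sdiff.mp this).1
      · intro hsG
        have : s ∈ G'.1 \ covered n := mem_sdiff.mpr ⟨hsG, hs⟩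
        rw [← h2] at this
        exact (mem_sdiff.mp this).1
  have hTcard : T.card = 9 ^ (Quads n).card * 2 ^ ((Valid n).card - 4 * (Quads n).card) := by
    rw [hT, card_product, Finset.card_pi, Finset.prod_const, A_card, card_powerset,
      card_sdiff_of_subset covered_subset, covered_card]
  calc Nat.card {G : Finset (Sq n) // IsGaussoid n G}
      ≤ Nat.card {x // x ∈ T} := Nat.card_le_card_of_injective Φ hinj
    _ = T.card := Nat.card_eq_finsetCard T
    _ = _ := hTcard


lemma U_card_ge {n : ℕ} (hn : 5 ≤ n) : (n / 2) * 2 ^ (n - 3) ≤ (U n).card := by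
  have hn0 : 0 < n := by omega
  set f : ℕ → Fin n := fun a => ⟨a % n, Nat.mod_lt a hn0⟩ with hf
  have fval : ∀ a, a < n → (f a : ℕ) = a := fun a ha => Nat.mod_eq_of_lt ha
  set w : ℕ → ℕ := fun t => if t = 0 then 2 else 0 with hw
  have hwlt : ∀ t, w t < n := by intro t; simp only [hw]; split <;> omega
  have hrange : ∀ t, t ∈ range (n / 2) → 2*t+1 < n := by
    intro t ht; rw [mem_range] at ht; omega
  have hwne : ∀ t, w t ≠ 2*t ∧ w t ≠ 2*t+1 := by
    intro t; simp only [hw]; split <;> omega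
  set D : Finset (Σ _ : ℕ, Finset (Fin n)) :=
    (range (n / 2)).sigma
      (fun t => ((univ : Finset (Fin n)) \ {f (2*t), f (2*t+1), f (w t)}).powerset) with hD
  set ψ : (Σ _ : ℕ, Finset (Fin n)) → Sq n :=
    fun s => ({f (2*s.1), f (2*s.1+1)},
      if Even s.2.card then s.2 else insert (f (w s.1)) s.2) with hψ
  have hK3 : ∀ {t K}, t ∈ range (n/2) →
      K ∈ ((univ : Finset (Fin n)) \ {f (2*t), f (2*t+1), f (w t)}).powerset →
      f (2*t) ∉ K ∧ f (2*t+1) ∉ K ∧ f (w t) ∉ K := by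
    intro t K ht hK
    rw [mem_powerset] at hK
    exact ⟨fun h => (mem_sdiff.mp (hK h)).2 (by simp),
      fun h => (mem_sdiff.mp (hK h)).2 (by simp),
      fun h => (mem_sdiff.mp (hK h)).2 (by simp)⟩
  have hcard : D.card = (n / 2) * 2 ^ (n - 3) := by
    rw [hD, card_sigma]
    rw [Finset.sum_congr rfl (g := fun _ => 2 ^ (n-3)) ?_, Finset.sum_const, card_range,
      smul_eq_mul]
    intro t ht
    have h1 := hrange t ht
    have h2 := hwne t
    have hv1 : (f (2*t) : ℕ) = 2*t := fval _ (by omega)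
    have hv2 : (f (2*t+1) : ℕ) = 2*t+1 := fval _ h1
    have hv3 : (f (w t) : ℕ) = w t := fval _ (hwlt t)
    rw [card_powerset, card_sdiff_of_subset (subset_univ _)]
    congr 1
    have c3 : ({f (2*t), f (2*t+1), f (w t)} : Finset (Fin n)).card = 3 := by
      rw [card_insert_of_notMem, card_insert_of_notMem, card_singleton]
      · simp only [mem_singleton]; intro h; have := congrArg Fin.val h; omega
      · simp only [mem_insert, mem_singleton]
        rintro (h | h) <;> · have := congrArg Fin.val h; omega
    rw [c3, card_univ, Fintype.card_fin]
  have hmaps : ∀ s ∈ D, ψ s ∈ U n := by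
    rintro ⟨t, K⟩ hs
    rw [hD, mem_sigma] at hs
    obtain ⟨ht, hK⟩ := hs
    obtain ⟨hn1, hn2, hn3⟩ := hK3 ht hK
    have hn1 : f (2*t) ∉ K := hn1
    have hn2 : f (2*t+1) ∉ K := hn2
    have hn3 : f (w t) ∉ K := hn3
    have h1 := hrange t ht
    have h2 := hwne t
    have hv1 : (f (2*t) : ℕ) = 2*t := fval _ (by omega)
    have hv2 : (f (2*t+1) : ℕ) = 2*t+1 := fval _ h1
    have hv3 : (f (w t) : ℕ) = w t := fval _ (hwlt t)
    rw [U, mem_filter]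
    refine ⟨mem_univ _, ⟨f (2*t), f (2*t+1), rfl, ⟨t, by rw [hv1]; ring⟩,
      by rw [hv2, hv1]⟩, ?_, ?_⟩
    · rw [disjoint_left]
      intro a ha hctx
      simp only [hψ, mem_insert, mem_singleton] at ha
      have hctx' : a ∈ K ∨ a = f (w t) := by
        simp only [hψ] at hctx
        split at hctx
        · exact Or.inl hctx
        · rcases mem_insert.mp hctx with h | h
          · exact Or.inr h
          · exact Or.inl h
      rcases ha with rfl | rfl <;> rcases hctx' with h | h
      · exact hn1 h
      · have hv := congrArg Fin.val h; rw [hv1, hv3] at hv; omega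
      · exact hn2 h
      · have hv := congrArg Fin.val h; rw [hv2, hv3] at hv; omega
    · simp only [hψ]
      split_ifs with he
      · exact he
      · rw [card_insert_of_notMem hn3]
        rcases Nat.even_or_odd K.card with h | h
        · exact absurd h he
        · obtain ⟨u, hu⟩ := h
          exact ⟨u+1, by show K.card + 1 = (u+1)+(u+1); omega⟩
  have hinj : Set.InjOn ψ D := by
    rintro ⟨t, K⟩ hs ⟨t', K'⟩ hs' heq
    have hs1 : (⟨t, K⟩ : Σ _ : ℕ, Finset (Fin n)) ∈ D := hs
    have hs1' : (⟨t', K'⟩ : Σ _ : ℕ, Finset (Fin n)) ∈ D := hs'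
    rw [hD, mem_sigma] at hs1 hs1'
    obtain ⟨htr, hK⟩ := hs1
    obtain ⟨htr', hK'⟩ := hs1'
    obtain ⟨hn1, hn2, hn3⟩ := hK3 htr hK
    obtain ⟨hn1', hn2', hn3'⟩ := hK3 htr' hK'
    have hn3 : f (w t) ∉ K := hn3
    have hn3' : f (w t') ∉ K' := hn3'
    simp only [hψ, Prod.mk.injEq] at heq
    obtain ⟨hpair, hctx⟩ := heq
    have hb := hrange t htr
    have hb' := hrange t' htr'
    have hv1 : (f (2*t) : ℕ) = 2*t := fval _ (by omega)
    have hv1' : (f (2*t') : ℕ) = 2*t' := fval _ (by omega)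
    have hv2' : (f (2*t'+1) : ℕ) = 2*t'+1 := fval _ hb'
    have htt : t = t' := by
      have hm : f (2*t) ∈ ({f (2*t'), f (2*t'+1)} : Finset (Fin n)) := by
        rw [← hpair]; exact mem_insert_self _ _
      rcases mem_insert.mp hm with h | h
      · have hv := congrArg Fin.val h; rw [hv1, hv1'] at hv; omega
      · rw [mem_singleton] at h
        have hv := congrArg Fin.val h; rw [hv1, hv2'] at hv; omega
    subst htt
    have hKK : K = K' := by
      by_cases e1 : Even K.card <;> by_cases e2 : Even K'.card
      · rw [if_pos e1, if_pos e2] at hctx; exact hctx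
      · rw [if_pos e1, if_neg e2] at hctx
        exact absurd (show f (w t) ∈ K by rw [hctx]; exact mem_insert_self _ _) hn3
      · rw [if_neg e1, if_pos e2] at hctx
        exact absurd (show f (w t) ∈ K' by rw [← hctx]; exact mem_insert_self _ _) hn3'
      · rw [if_neg e1, if_neg e2] at hctx
        have h := congrArg (fun S => Finset.erase S (f (w t))) hctx
        simpa [erase_insert hn3, erase_insert hn3'] using h
    rw [hKK]
  calc (n / 2) * 2 ^ (n - 3) = D.card := hcard.symm
    _ ≤ (U n).card := card_le_card_of_injOn ψ hmaps hinj

lemma card_lower {n : ℕ} (hn : 5 ≤ n) :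
    2 ^ ((n / 2) * 2 ^ (n - 3)) ≤ Nat.card {G : Finset (Sq n) // IsGaussoid n G} := by
  classical
  have h1 : ∀ S : {S // S ∈ (U n).powerset}, IsGaussoid n S.1 :=
    fun S => gaussoid_of_subset_U _ (mem_powerset.mp S.2)
  have hinj : Function.Injective (fun S : {S // S ∈ (U n).powerset} =>
      (⟨S.1, h1 S⟩ : {G : Finset (Sq n) // IsGaussoid n G})) := by
    intro S S' h
    apply Subtype.ext
    exact congrArg (fun x : {G : Finset (Sq n) // IsGaussoid n G} => x.1) h
  calc 2 ^ ((n / 2) * 2 ^ (n - 3)) ≤ 2 ^ (U n).card :=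
      Nat.pow_le_pow_right (by norm_num) (U_card_ge hn)
    _ = (U n).powerset.card := (card_powerset _).symm
    _ = Nat.card {S // S ∈ (U n).powerset} := (Nat.card_eq_finsetCard _).symm
    _ ≤ _ := Nat.card_le_card_of_injective _ hinj

lemma nat_ineq {n : ℕ} (hn : 5 ≤ n) : 10*(n*(n-1)) ≤ 144*((n/2)*((n/2)-1)) := by
  obtain ⟨a, ha⟩ : ∃ a, n/2 = a + 2 := ⟨n/2 - 2, by omega⟩
  have h2 : n = 2*a+4 ∨ n = 2*a+5 := by omega
  rcases h2 with h | h
  · rw [ha, h, show 2*a+4-1 = 2*a+3 by omega, show a+2-1 = a+1 by omega]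
    nlinarith [sq_nonneg a]
  · rw [ha, h, show 2*a+5-1 = 2*a+4 by omega, show a+2-1 = a+1 by omega]
    nlinarith [sq_nonneg a]

end Stmt15Aux

/-- For `n ≥ 5`, the number of `n`-gaussoids is doubly exponentially large:
`2^{(1/3)·n·2^{n-6}} ≤ |𝔊_n| ≤ 2^{C(n,2)·2^{n-2}} / 2^{(4/9)·n(n-1)·2^{n-6}}`. -/
theorem stmt_15 (n : ℕ) (hn : 5 ≤ n) :
    (2 : ℝ) ^ ((1 / 3 : ℝ) * n * 2 ^ ((n : ℝ) - 6)) ≤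
      (Nat.card {G : Finset (Sq n) // IsGaussoid n G} : ℝ) ∧
    (Nat.card {G : Finset (Sq n) // IsGaussoid n G} : ℝ) ≤
      (2 : ℝ) ^ (n.choose 2 * 2 ^ (n - 2) : ℕ) /
        (2 : ℝ) ^ ((4 / 9 : ℝ) * n * (n - 1) * 2 ^ ((n : ℝ) - 6)) := by
  classical
  open Finset Stmt15Aux in
  have hcast5 : ((n - 5 : ℕ) : ℝ) = (n:ℝ) - 5 := by
    rw [Nat.cast_sub (by omega : 5 ≤ n)]; norm_num
  have e2 : (2:ℝ) ^ ((n:ℝ) - 6) = (2:ℝ)^(n-5:ℕ) / 2 := by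
    rw [show ((n:ℝ) - 6) = ((n-5:ℕ):ℝ) - 1 by rw [hcast5]; ring]
    rw [Real.rpow_sub (by norm_num), Real.rpow_one, Real.rpow_natCast]
  have hPpos : (0:ℝ) < 2^(n-5:ℕ) := by positivity
  constructor
  · -- lower bound
    have key : (1/3:ℝ) * n * 2^((n:ℝ)-6) ≤ (((n/2) * 2^(n-3) : ℕ) : ℝ) := by
      rw [e2]
      have hE : ((n/2) * 2^(n-3) : ℕ) = ((n/2) * 4) * 2^(n-5) := by
        rw [show n - 3 = 2 + (n-5) from by omega, pow_add]; ring
      rw [hE]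
      push_cast
      have h24 : (n:ℝ) ≤ 24 * ((n/2 : ℕ):ℝ) := by
        exact_mod_cast Nat.cast_le.mpr (show n ≤ 24*(n/2) by omega)
      nlinarith [hPpos.le, mul_le_mul_of_nonneg_right h24 hPpos.le]
    calc (2:ℝ) ^ ((1/3:ℝ) * n * 2^((n:ℝ)-6))
        ≤ (2:ℝ) ^ ((((n/2) * 2^(n-3) : ℕ) : ℝ)) :=
          Real.rpow_le_rpow_of_exponent_le (by norm_num) key
      _ = ((2 ^ ((n/2) * 2^(n-3)) : ℕ) : ℝ) := by
          rw [Real.rpow_natCast]; push_cast; ring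
      _ ≤ _ := Nat.cast_le.mpr (Stmt15Aux.card_lower hn)
  · -- upper bound
    have hcast1 : ((n - 1 : ℕ) : ℝ) = (n:ℝ) - 1 := by
      rw [Nat.cast_sub (by omega : 1 ≤ n)]; norm_num
    set Q := (Quads n).card with hQdef
    set V := (Valid n).card with hVdef
    have h4Q : 4*Q ≤ V := by
      rw [hVdef, ← covered_card]
      exact card_le_card covered_subset
    have hVN : V ≤ n.choose 2 * 2 ^ (n - 2) := valid_card_le
    have hnat := card_upper (n := n)
    have hcpos : (0:ℝ) < (2:ℝ) ^ ((4/9 : ℝ) * n * ((n:ℝ) - 1) * 2^((n:ℝ)-6)) :=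
      Real.rpow_pos_of_pos (by norm_num) _
    rw [le_div_iff₀ hcpos]
    have b216 : (2:ℝ)^((4:ℝ)/5) ≤ 16/9 := by
      have h5 : ((2:ℝ)^((4:ℝ)/5))^(5:ℕ) = 16 := by
        rw [← Real.rpow_natCast ((2:ℝ)^((4:ℝ)/5)) 5, ← Real.rpow_mul (by norm_num)]
        norm_num
      apply le_of_pow_le_pow_left₀ (n := 5) (by norm_num) (by norm_num)
      rw [h5]; norm_num
    have hcle : (4/9:ℝ) * n * ((n:ℝ) - 1) * 2^((n:ℝ)-6) ≤ (4/5:ℝ) * Q := by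
      rw [e2]
      have hq : (n/2)*((n/2)-1)*2^(n-3) ≤ Q := quads_card_ge hn
      have hq2 : (n/2)*((n/2)-1)*(4 * 2^(n-5)) ≤ Q := by
        calc (n/2)*((n/2)-1)*(4 * 2^(n-5)) = (n/2)*((n/2)-1)*2^(n-3) := by
              rw [show n-3 = 2+(n-5) from by omega, pow_add]; norm_num
          _ ≤ Q := hq
      have hQR : (((n/2)*((n/2)-1) : ℕ):ℝ) * (4 * 2^(n-5)) ≤ (Q:ℝ) := by
        exact_mod_cast Nat.cast_le.mpr hq2
      have hnn := nat_ineq hn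
      have hnnR : 10*((n:ℝ)*((n:ℝ)-1)) ≤ 144*(((n/2)*((n/2)-1) : ℕ):ℝ) := by
        rw [← hcast1]
        exact_mod_cast Nat.cast_le.mpr hnn
      nlinarith [mul_le_mul_of_nonneg_right hnnR hPpos.le, hQR, hPpos.le]
    have key2 : (2:ℝ) ^ ((4/9 : ℝ) * n * ((n:ℝ) - 1) * 2^((n:ℝ)-6)) ≤ ((16:ℝ)/9)^Q := by
      calc (2:ℝ) ^ ((4/9 : ℝ) * n * ((n:ℝ) - 1) * 2^((n:ℝ)-6))
          ≤ (2:ℝ) ^ ((4/5:ℝ) * Q) := Real.rpow_le_rpow_of_exponent_le (by norm_num) hcle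
        _ = ((2:ℝ)^((4:ℝ)/5))^Q := by
            rw [← Real.rpow_natCast ((2:ℝ)^((4:ℝ)/5)) Q, ← Real.rpow_mul (by norm_num)]
        _ ≤ ((16:ℝ)/9)^Q := pow_le_pow_left₀ (by positivity) b216 Q
    set N := n.choose 2 * 2 ^ (n - 2) with hNdef
    have h4QN : 4*Q ≤ N := le_trans h4Q hVN
    calc (Nat.card {G : Finset (Sq n) // IsGaussoid n G} : ℝ) *
          (2:ℝ) ^ ((4/9 : ℝ) * n * ((n:ℝ) - 1) * 2^((n:ℝ)-6))
        ≤ ((9 ^ Q * 2 ^ (V - 4*Q) : ℕ):ℝ) *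
          (2:ℝ) ^ ((4/9 : ℝ) * n * ((n:ℝ) - 1) * 2^((n:ℝ)-6)) :=
          mul_le_mul_of_nonneg_right (Nat.cast_le.mpr hnat) hcpos.le
      _ ≤ ((9:ℝ)^Q * 2^(N - 4*Q)) * ((16:ℝ)/9)^Q := by
          push_cast
          have h1 : (2:ℝ)^(V - 4*Q) ≤ (2:ℝ)^(N - 4*Q) :=
            pow_le_pow_right₀ (by norm_num) (by omega)
          exact mul_le_mul (mul_le_mul_of_nonneg_left h1 (by positivity)) key2
            hcpos.le (by positivity)
      _ = (9:ℝ)^Q * ((16:ℝ)/9)^Q * 2^(N - 4*Q) := by ring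
      _ = (16:ℝ)^Q * 2^(N - 4*Q) := by
          rw [div_pow, mul_div_cancel₀]
          positivity
      _ = (2:ℝ)^(4*Q) * 2^(N - 4*Q) := by
          rw [pow_mul]; norm_num
      _ = (2:ℝ)^N := by
          rw [← pow_add]
          congr 1
          omega
end
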